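/- arXiv:1201.3350 — 9 statements merged into one kernel-verified Lean document; each statement's English description precedes it below -/
import Mathlib

section
/- For any move set M ⊆ ℕ² \ {(0,0)}, every position (x,y) ∈ T_Q is a terminal position of the Q-subtraction game G_Q(M), i.e. there is no legal move from (x,y). -/
/-- Membership in the set of allowed positions `B_Q`. -/
def inBQ (p1 q1 p2 q2 : ℕ) (pos : ℕ × ℕ) : Prop :=
  pos.1 * q1 ≤ pos.2 * p1 ∧ pos.2 * p2 ≤ pos.1 * q2

/-- Membership in the set `T_Q` (the inequalities are read in ℤ). -/
def inTQ (p1 q1 p2 q2 : ℕ) (pos : ℕ × ℕ) : Prop :=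
  inBQ p1 q1 p2 q2 pos ∧
    (p1 : ℤ) * ((pos.2 : ℤ) - (q2 : ℤ)) < (q1 : ℤ) * ((pos.1 : ℤ) - (p2 : ℤ)) ∧
    (p2 : ℤ) * ((pos.2 : ℤ) - (q1 : ℤ)) > (q2 : ℤ) * ((pos.1 : ℤ) - (p1 : ℤ))

/-- A legal move of the Q-subtraction game `G_Q(M)`. -/
def QMove (p1 q1 p2 q2 : ℕ) (M : Set (ℕ × ℕ)) (pos pos' : ℕ × ℕ) : Prop :=
  ∃ s t : ℕ, (s, t) ∈ M ∧
    p1 * s + p2 * t ≤ pos.1 ∧ q1 * s + q2 * t ≤ pos.2 ∧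
    pos'.1 = pos.1 - (p1 * s + p2 * t) ∧ pos'.2 = pos.2 - (q1 * s + q2 * t) ∧
    inBQ p1 q1 p2 q2 pos'

theorem stmt_0 (p1 q1 p2 q2 : ℕ) (hp1 : 0 < p1) (hq2 : 0 < q2)
    (hD : q1 * p2 < p1 * q2)
    (M : Set (ℕ × ℕ)) (hM : (0, 0) ∉ M)
    (x y : ℕ) (hxy : inTQ p1 q1 p2 q2 (x, y)) :
    ¬ ∃ pos', QMove p1 q1 p2 q2 M (x, y) pos' := by
  rintro ⟨pos', s, t, hmem, h1, h2, ha, hb, hb1, hb2⟩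
  obtain ⟨⟨hB1, hB2⟩, hT1, hT2⟩ := hxy
  rw [ha, hb] at hb1 hb2
  simp only at h1 h2 hb1 hb2
  zify [h1, h2] at hb1 hb2
  simp only at hT1 hT2
  have hDz : (q1 : ℤ) * p2 < (p1 : ℤ) * q2 := by exact_mod_cast hD
  rcases Nat.eq_zero_or_pos t with ht | ht
  · rcases Nat.eq_zero_or_pos s with hs | hs
    · subst hs; subst ht; exact hM hmem
    · have hs' : (1 : ℤ) ≤ (s : ℤ) := by exact_mod_cast hs
      subst ht
      push_cast at hb2
      nlinarith [hb2, hT2, hs', hDz]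
  · have ht' : (1 : ℤ) ≤ (t : ℤ) := by exact_mod_cast ht
    push_cast at hb1
    nlinarith [hb1, hT1, ht', hDz]
end

section
/- For a move set M ⊆ ℕ² \ {(0,0)}, the set T_Q equals the set of ALL terminal positions of the Q-subtraction game G_Q(M) if and only if {(0,1),(1,0)} ⊆ M. -/
/-- Key arithmetic lemma: if a B_Q position satisfies the non-strict version of
the second T_Q inequality (negated), then the coordinates are large enough. -/
lemma keyQ (p1 q1 p2 q2 x y : ℤ) (hp1 : 0 < p1) (hq2 : 0 < q2)
    (hq1 : 0 ≤ q1) (hp2 : 0 ≤ p2) (hD : q1 * p2 < p1 * q2)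
    (h1 : x * q1 ≤ y * p1) (h2 : y * p2 ≤ x * q2)
    (h3 : p2 * (y - q1) ≤ q2 * (x - p1)) : p1 ≤ x ∧ q1 ≤ y := by
  have hy : q1 ≤ y := by
    nlinarith [mul_le_mul_of_nonneg_left h3 hq1,
      mul_le_mul_of_nonneg_left h1 (le_of_lt hq2)]
  refine ⟨?_, hy⟩
  nlinarith [mul_nonneg hp2 (sub_nonneg.2 hy)]

set_option maxHeartbeats 1600000 in
theorem stmt_1 (p1 q1 p2 q2 : ℕ) (hp1 : 0 < p1) (hq2 : 0 < q2)
    (hD : q1 * p2 < p1 * q2)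
    (M : Set (ℕ × ℕ)) (hM : (0, 0) ∉ M) :
    {pos : ℕ × ℕ | inBQ p1 q1 p2 q2 pos ∧ ¬ ∃ pos', QMove p1 q1 p2 q2 M pos pos'} =
      {pos : ℕ × ℕ | inTQ p1 q1 p2 q2 pos} ↔
    ((0, 1) ∈ M ∧ (1, 0) ∈ M) := by
  have hDZ : (q1 : ℤ) * p2 < (p1 : ℤ) * q2 := by exact_mod_cast hD
  constructor
  · intro h
    have hset := Set.ext_iff.mp h
    constructor
    · -- use position (p2, q2)
      have hB : inBQ p1 q1 p2 q2 (p2, q2) := by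
        constructor
        · simpa [mul_comm] using hD.le
        · simp [mul_comm]
      have hT : ¬ inTQ p1 q1 p2 q2 (p2, q2) := by
        rintro ⟨-, h1, -⟩
        simp at h1
      have := (hset (p2, q2)).not.mpr (by simpa using hT)
      simp only [Set.mem_setOf_eq, not_and, not_not] at this
      obtain ⟨pos', s, t, hst, hle1, hle2, hx', hy', hB1', hB2'⟩ := this hB
      simp only at hle1 hle2
      rw [hx', hy'] at hB2'
      simp only at hB2'
      zify [hle1, hle2] at hB2'
      -- hB2' gives s = 0
      have hs0 : s = 0 := by
        by_contra hs
        have h1s : 1 ≤ s := Nat.one_le_iff_ne_zero.mpr hs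
        have : (1 : ℤ) ≤ (s : ℤ) := by exact_mod_cast h1s
        nlinarith [this, hB2']
      subst hs0
      have ht1 : t = 1 := by
        have h1 : q2 * t ≤ q2 := by simpa using hle2
        have ht : t ≤ 1 := by
          by_contra hc
          push_neg at hc
          nlinarith
        interval_cases t
        · exact absurd hst hM
        · rfl
      subst ht1
      exact hst
    · -- use position (p1, q1)
      have hB : inBQ p1 q1 p2 q2 (p1, q1) := by
        constructor
        · simp [mul_comm]
        · simpa [mul_comm] using hD.le
      have hT : ¬ inTQ p1 q1 p2 q2 (p1, q1) := by
        rintro ⟨-, -, h2⟩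
        simp at h2
      have := (hset (p1, q1)).not.mpr (by simpa using hT)
      simp only [Set.mem_setOf_eq, not_and, not_not] at this
      obtain ⟨pos', s, t, hst, hle1, hle2, hx', hy', hB1', hB2'⟩ := this hB
      simp only at hle1 hle2
      rw [hx', hy'] at hB1'
      simp only at hB1'
      zify [hle1, hle2] at hB1'
      have ht0 : t = 0 := by
        by_contra ht
        have h1t : 1 ≤ t := Nat.one_le_iff_ne_zero.mpr ht
        have : (1 : ℤ) ≤ (t : ℤ) := by exact_mod_cast h1t
        nlinarith [this, hB1']
      subst ht0
      have hs1 : s = 1 := by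
        have h1 : p1 * s ≤ p1 := by simpa using hle1
        have hs : s ≤ 1 := by
          by_contra hc
          push_neg at hc
          nlinarith
        interval_cases s
        · exact absurd hst hM
        · rfl
      subst hs1
      exact hst
  · rintro ⟨h01, h10⟩
    ext ⟨x, y⟩
    simp only [Set.mem_setOf_eq]
    constructor
    · rintro ⟨hB, hnm⟩
      obtain ⟨hb1, hb2⟩ := hB
      simp only at hb1 hb2
      have hb1z : (x : ℤ) * q1 ≤ (y : ℤ) * p1 := by exact_mod_cast hb1
      have hb2z : (y : ℤ) * p2 ≤ (x : ℤ) * q2 := by exact_mod_cast hb2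
      refine ⟨⟨hb1, hb2⟩, ?_, ?_⟩
      · by_contra h'
        push_neg at h'
        -- move (0,1) is legal, contradiction
        have hk := keyQ (q2 : ℤ) p2 q1 p1 y x (by exact_mod_cast hq2)
          (by exact_mod_cast hp1) (Int.ofNat_nonneg p2) (Int.ofNat_nonneg q1)
          (by linarith) hb2z hb1z (by linarith)
        have hxp : p2 ≤ x := by exact_mod_cast hk.2
        have hyq : q2 ≤ y := by exact_mod_cast hk.1
        apply hnm
        refine ⟨(x - p2, y - q2), 0, 1, h01, ?_, ?_, ?_, ?_, ?_, ?_⟩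
        · simpa using hxp
        · simpa using hyq
        · simp
        · simp
        · show (x - p2) * q1 ≤ (y - q2) * p1
          zify [hxp, hyq]
          nlinarith [h']
        · show (y - q2) * p2 ≤ (x - p2) * q2
          zify [hxp, hyq]
          nlinarith [hb2z]
      · by_contra h'
        push_neg at h'
        have hk := keyQ (p1 : ℤ) q1 p2 q2 x y (by exact_mod_cast hp1)
          (by exact_mod_cast hq2) (Int.ofNat_nonneg q1) (Int.ofNat_nonneg p2)
          hDZ hb1z hb2z (by linarith)
        have hxp : p1 ≤ x := by exact_mod_cast hk.1
        have hyq : q1 ≤ y := by exact_mod_cast hk.2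
        apply hnm
        refine ⟨(x - p1, y - q1), 1, 0, h10, ?_, ?_, ?_, ?_, ?_, ?_⟩
        · simpa using hxp
        · simpa using hyq
        · simp
        · simp
        · show (x - p1) * q1 ≤ (y - q1) * p1
          zify [hxp, hyq]
          nlinarith [hb1z]
        · show (y - q1) * p2 ≤ (x - p1) * q2
          zify [hxp, hyq]
          nlinarith [h']
    · rintro ⟨hB, hlt1, hlt2⟩
      refine ⟨hB, ?_⟩
      rintro ⟨pos', s, t, hst, hle1, hle2, hx', hy', hB1', hB2'⟩
      simp only at hle1 hle2 hlt1 hlt2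
      rw [hx', hy'] at hB1' hB2'
      simp only at hB1' hB2'
      zify [hle1, hle2] at hB1' hB2'
      rcases Nat.eq_zero_or_pos s with hs | hs
      · rcases Nat.eq_zero_or_pos t with ht | ht
        · subst hs; subst ht; exact hM hst
        · -- t ≥ 1 : contradict hlt1 via hB1'
          have htz : (1 : ℤ) ≤ (t : ℤ) := by exact_mod_cast ht
          have hsz : (0 : ℤ) ≤ (s : ℤ) := Int.ofNat_nonneg s
          nlinarith [hB1', hlt1, mul_nonneg (sub_nonneg.2 htz)
            (sub_nonneg.2 hDZ.le)]
      · have hsz : (1 : ℤ) ≤ (s : ℤ) := by exact_mod_cast hs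
        nlinarith [hB2', hlt2, mul_nonneg (sub_nonneg.2 hsz)
          (sub_nonneg.2 hDZ.le)]
end

section
/- The set T_Q is finite and its cardinality equals D = p₁q₂ − q₁p₂. -/
section SparAux

/-- The half-open parallelogram set spanned by columns `(a,b)` and `(c,d)`. -/
private def Spar (a b c d : ℤ) : Set (ℤ × ℤ) :=
  {z | 0 ≤ a * z.2 - b * z.1 ∧ a * z.2 - b * z.1 < a * d - b * c ∧
       0 ≤ d * z.1 - c * z.2 ∧ d * z.1 - c * z.2 < a * d - b * c}

private lemma ncard_eq_of_bij {s t : Set (ℤ × ℤ)} (F G : ℤ × ℤ → ℤ × ℤ)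
    (hF : ∀ z ∈ s, F z ∈ t) (hG : ∀ z ∈ t, G z ∈ s)
    (hGF : ∀ z ∈ s, G (F z) = z) (hFG : ∀ z ∈ t, F (G z) = z) :
    t.ncard = s.ncard := by
  have himg : t = F '' s := by
    ext z
    constructor
    · intro hz; exact ⟨G z, hG z hz, hFG z hz⟩
    · rintro ⟨w, hw, rfl⟩; exact hF w hw
  rw [himg, Set.ncard_image_of_injOn]
  intro x hx y hy hxy
  rw [← hGF x hx, ← hGF y hy, hxy]

private lemma Spar_finite {a b c d : ℤ} (hD : 0 < a * d - b * c) : (Spar a b c d).Finite := by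
  apply Set.Finite.of_finite_image
    (f := fun z : ℤ × ℤ => (a * z.2 - b * z.1, d * z.1 - c * z.2))
  · apply Set.Finite.subset
      ((Finset.Ico (0:ℤ) (a*d - b*c) ×ˢ Finset.Ico (0:ℤ) (a*d - b*c)) : Finset (ℤ × ℤ)).finite_toSet
    rintro _ ⟨z, hz, rfl⟩
    obtain ⟨h1, h2, h3, h4⟩ := hz
    simp only [Finset.coe_product, Set.mem_prod, Finset.mem_coe, Finset.mem_Ico]
    exact ⟨⟨h1, h2⟩, ⟨h3, h4⟩⟩
  · intro z hz w hw h
    have h1 : a * z.2 - b * z.1 = a * w.2 - b * w.1 := congrArg Prod.fst h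
    have h2 : d * z.1 - c * z.2 = d * w.1 - c * w.2 := congrArg Prod.snd h
    have e1 : (a*d - b*c) * z.1 = (a*d - b*c) * w.1 := by linear_combination a * h2 + c * h1
    have e2 : (a*d - b*c) * z.2 = (a*d - b*c) * w.2 := by linear_combination d * h1 + b * h2
    exact Prod.ext (mul_left_cancel₀ hD.ne' e1) (mul_left_cancel₀ hD.ne' e2)

private lemma swap_ncard (a b c d : ℤ) : (Spar d c b a).ncard = (Spar a b c d).ncard := by
  apply ncard_eq_of_bij (fun z => (z.2, z.1)) (fun z => (z.2, z.1))
  · rintro ⟨x, y⟩ ⟨h1, h2, h3, h4⟩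
    refine ⟨by dsimp at *; linarith, by dsimp at *; linarith,
      by dsimp at *; linarith, by dsimp at *; linarith⟩
  · rintro ⟨x, y⟩ ⟨h1, h2, h3, h4⟩
    refine ⟨by dsimp at *; linarith, by dsimp at *; linarith,
      by dsimp at *; linarith, by dsimp at *; linarith⟩
  · intro z _; rfl
  · intro z _; rfl

private lemma neg_ncard (a b c d : ℤ) : (Spar (-a) (-b) (-c) (-d)).ncard = (Spar a b c d).ncard := by
  apply ncard_eq_of_bij (fun z => (-z.1, -z.2)) (fun z => (-z.1, -z.2))
  · rintro ⟨x, y⟩ ⟨h1, h2, h3, h4⟩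
    refine ⟨by dsimp at *; linarith, by dsimp at *; linarith,
      by dsimp at *; linarith, by dsimp at *; linarith⟩
  · rintro ⟨x, y⟩ ⟨h1, h2, h3, h4⟩
    refine ⟨by dsimp at *; linarith, by dsimp at *; linarith,
      by dsimp at *; linarith, by dsimp at *; linarith⟩
  · intro z _; simp
  · intro z _; simp

private lemma rot_ncard (a b c d : ℤ) : (Spar b (-a) d (-c)).ncard = (Spar a b c d).ncard := by
  apply ncard_eq_of_bij (fun z => (z.2, -z.1)) (fun z => (-z.2, z.1))
  · rintro ⟨x, y⟩ ⟨h1, h2, h3, h4⟩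
    refine ⟨by dsimp at *; linarith, by dsimp at *; linarith,
      by dsimp at *; linarith, by dsimp at *; linarith⟩
  · rintro ⟨x, y⟩ ⟨h1, h2, h3, h4⟩
    refine ⟨by dsimp at *; linarith, by dsimp at *; linarith,
      by dsimp at *; linarith, by dsimp at *; linarith⟩
  · intro z _; simp
  · intro z _; simp

private lemma shear2 (a b c d k : ℤ) (hD : 0 < a * d - b * c) :
    (Spar a b (c - k * a) (d - k * b)).ncard = (Spar a b c d).ncard := by
  have hne : a * d - b * c ≠ 0 := hD.ne'
  apply ncard_eq_of_bij
    (F := fun z => (z.1 - ((d - k*b) * z.1 - (c - k*a) * z.2) / (a*d - b*c) * a,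
                    z.2 - ((d - k*b) * z.1 - (c - k*a) * z.2) / (a*d - b*c) * b))
    (G := fun z => (z.1 - (d * z.1 - c * z.2) / (a*d - b*c) * a,
                    z.2 - (d * z.1 - c * z.2) / (a*d - b*c) * b))
  · rintro ⟨x, y⟩ ⟨h1, h2, h3, h4⟩
    dsimp only at *
    set m := ((d - k*b) * x - (c - k*a) * y) / (a*d - b*c) with hm
    have hmod : (d - k*b) * (x - m*a) - (c - k*a) * (y - m*b)
        = ((d - k*b) * x - (c - k*a) * y) % (a*d - b*c) := by
      rw [Int.emod_def, hm]; ring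
    have hr0 := Int.emod_nonneg ((d - k*b) * x - (c - k*a) * y) hne
    have hr1 := Int.emod_lt_of_pos ((d - k*b) * x - (c - k*a) * y) hD
    refine ⟨?_, ?_, ?_, ?_⟩
    · dsimp only; nlinarith [h1]
    · dsimp only; nlinarith [h2]
    · dsimp only; nlinarith [hmod, hr0]
    · dsimp only; nlinarith [hmod, hr1]
  · rintro ⟨x, y⟩ ⟨h1, h2, h3, h4⟩
    dsimp only at *
    set m := (d * x - c * y) / (a*d - b*c) with hm
    have hmod : d * (x - m*a) - c * (y - m*b) = (d * x - c * y) % (a*d - b*c) := by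
      rw [Int.emod_def, hm]; ring
    have hr0 := Int.emod_nonneg (d * x - c * y) hne
    have hr1 := Int.emod_lt_of_pos (d * x - c * y) hD
    refine ⟨?_, ?_, ?_, ?_⟩
    · dsimp only; nlinarith [h1]
    · dsimp only; nlinarith [h2]
    · dsimp only; nlinarith [hmod, hr0]
    · dsimp only; nlinarith [hmod, hr1]
  · rintro ⟨x, y⟩ ⟨h1, h2, h3, h4⟩
    dsimp only at *
    set m := ((d - k*b) * x - (c - k*a) * y) / (a*d - b*c) with hm
    have e : d * (x - m*a) - c * (y - m*b) = (d*x - c*y) + (-m) * (a*d - b*c) := by ring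
    have e2 : (d * (x - m*a) - c * (y - m*b)) / (a*d - b*c) = -m := by
      rw [e, Int.add_mul_ediv_right _ _ hne, Int.ediv_eq_zero_of_lt h3 h4, zero_add]
    simp only [Prod.mk.injEq]
    rw [e2]
    exact ⟨by ring, by ring⟩
  · rintro ⟨x, y⟩ ⟨h1, h2, h3, h4⟩
    dsimp only at *
    set m := (d * x - c * y) / (a*d - b*c) with hm
    have e : (d - k*b) * (x - m*a) - (c - k*a) * (y - m*b)
        = ((d - k*b)*x - (c - k*a)*y) + (-m) * (a*d - b*c) := by ring
    have h4' : (d - k*b) * x - (c - k*a) * y < a*d - b*c := by nlinarith [h4]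
    have e2 : ((d - k*b) * (x - m*a) - (c - k*a) * (y - m*b)) / (a*d - b*c) = -m := by
      rw [e, Int.add_mul_ediv_right _ _ hne, Int.ediv_eq_zero_of_lt h3 h4', zero_add]
    simp only [Prod.mk.injEq]
    rw [e2]
    exact ⟨by ring, by ring⟩

private lemma base_b0 (a c d : ℤ) (ha : 0 < a) (hd : 0 < d) :
    (Spar a 0 c d).ncard = (a * d).toNat := by
  classical
  have hq : ∀ y : ℤ, d * (-((-(c * y)) / d)) - c * y = (-(c * y)) % d := by
    intro y; rw [Int.emod_def]; ring
  have hr0 : ∀ y : ℤ, 0 ≤ (-(c * y)) % d := fun y => Int.emod_nonneg _ hd.ne'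
  have hr1 : ∀ y : ℤ, (-(c * y)) % d < d := fun y => Int.emod_lt_of_pos _ hd
  have himg : Spar a 0 c d
      = (fun p : ℤ × ℤ => (p.1 + -((-(c * p.2)) / d), p.2)) ''
        ((Finset.Ico (0:ℤ) a ×ˢ Finset.Ico (0:ℤ) d) : Finset (ℤ × ℤ)) := by
    ext ⟨x, y⟩
    simp only [Spar, Set.mem_setOf_eq, Set.mem_image, Finset.mem_coe,
      Finset.mem_product, Finset.mem_Ico, Prod.mk.injEq]
    constructor
    · rintro ⟨h1, h2, h3, h4⟩
      refine ⟨(x - -((-(c * y)) / d), y), ⟨⟨?_, ?_⟩, ?_, ?_⟩, by ring, rfl⟩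
      · show (0:ℤ) ≤ x - -(-(c * y) / d)
        nlinarith [hq y, hr0 y, hr1 y, h3]
      · show x - -(-(c * y) / d) < a
        nlinarith [hq y, hr0 y, hr1 y, h4]
      · show (0:ℤ) ≤ y
        nlinarith [h1]
      · show y < d
        nlinarith [h2]
    · rintro ⟨⟨j, y'⟩, ⟨⟨hj0, hja⟩, hy0, hyd⟩, hx, rfl⟩
      dsimp only at *
      subst hx
      refine ⟨by nlinarith, by nlinarith, ?_, ?_⟩
      · nlinarith [hq y', hr0 y']
      · nlinarith [hq y', hr1 y']
  rw [himg, Set.ncard_image_of_injOn, Set.ncard_coe_finset, Finset.card_product,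
    Int.card_Ico, Int.card_Ico, sub_zero, sub_zero]
  · rcases Int.eq_ofNat_of_zero_le ha.le with ⟨A, rfl⟩
    rcases Int.eq_ofNat_of_zero_le hd.le with ⟨B, rfl⟩
    rw [show ((A:ℤ)) * (B:ℤ) = ((A*B : ℕ) : ℤ) by push_cast; ring]
    simp only [Int.toNat_natCast]
  · rintro ⟨j1, y1⟩ _ ⟨j2, y2⟩ _ h
    simp only [Prod.mk.injEq] at h ⊢
    obtain ⟨h1, h2⟩ := h
    subst h2
    exact ⟨by linarith, rfl⟩

private lemma case_b0 (a c d : ℤ) (hD : 0 < a * d) :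
    (Spar a 0 c d).ncard = (a * d).toNat := by
  rcases mul_pos_iff.mp hD with ⟨ha, hd⟩ | ⟨ha, hd⟩
  · exact base_b0 a c d ha hd
  · calc (Spar a 0 c d).ncard = (Spar (-a) (-0) (-c) (-d)).ncard := (neg_ncard a 0 c d).symm
      _ = (Spar (-a) 0 (-c) (-d)).ncard := by rw [neg_zero]
      _ = ((-a) * (-d)).toNat := base_b0 (-a) (-c) (-d) (by linarith) (by linarith)
      _ = (a * d).toNat := by rw [neg_mul_neg]

private lemma key (n : ℕ) : ∀ a b c d : ℤ, b.natAbs + d.natAbs ≤ n → 0 < a * d - b * c →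
    (Spar a b c d).ncard = (a * d - b * c).toNat := by
  induction n using Nat.strong_induction_on with
  | _ n IH =>
    intro a b c d hn hD
    by_cases hb : b = 0
    · subst hb
      rw [case_b0 a c d (by linarith)]
      congr 1; ring
    · by_cases hd : d = 0
      · subst hd
        have hcb : 0 < c * (-b) := by linarith
        calc (Spar a b c 0).ncard = (Spar 0 c b a).ncard := (swap_ncard a b c 0).symm
          _ = (Spar c (-0) a (-b)).ncard := (rot_ncard 0 c b a).symm
          _ = (Spar c 0 a (-b)).ncard := by rw [neg_zero]
          _ = (c * (-b)).toNat := case_b0 c a (-b) hcb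
          _ = (a * 0 - b * c).toNat := by congr 1; ring
      · rcases le_or_gt d.natAbs b.natAbs with hcmp | hcmp
        · -- reduce b mod d
          set k := b / d with hk
          have hbmod : b - k * d = b % d := by rw [hk, Int.emod_def]; ring
          have hlt : (b % d).natAbs < d.natAbs := by
            have h0 := Int.emod_nonneg b hd
            have h1 := Int.emod_lt b hd
            omega
          have hD' : 0 < d * a - c * b := by linarith
          have hshear := shear2 d c b a k hD'
          have hDnew : 0 < (a - k*c) * d - (b - k*d) * c := by
            have e : (a - k*c) * d - (b - k*d) * c = a*d - b*c := by ring
            rw [e]; exact hD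
          have hrec := IH ((b % d).natAbs + d.natAbs) (by omega)
            (a - k*c) (b - k*d) c d (by rw [hbmod]) hDnew
          calc (Spar a b c d).ncard = (Spar d c b a).ncard := (swap_ncard a b c d).symm
            _ = (Spar d c (b - k*d) (a - k*c)).ncard := hshear.symm
            _ = (Spar (a - k*c) (b - k*d) c d).ncard := swap_ncard (a - k*c) (b - k*d) c d
            _ = ((a - k*c) * d - (b - k*d) * c).toNat := hrec
            _ = (a * d - b * c).toNat := by congr 1; ring
        · -- reduce d mod b
          set k := d / b with hk
          have hdmod : d - k * b = d % b := by rw [hk, Int.emod_def]; ring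
          have hlt : (d % b).natAbs < b.natAbs := by
            have h0 := Int.emod_nonneg d hb
            have h1 := Int.emod_lt d hb
            omega
          have hshear := shear2 a b c d k hD
          have hDnew : 0 < a * (d - k*b) - b * (c - k*a) := by
            have e : a * (d - k*b) - b * (c - k*a) = a*d - b*c := by ring
            rw [e]; exact hD
          have hrec := IH (b.natAbs + (d % b).natAbs) (by omega)
            a b (c - k*a) (d - k*b) (by rw [hdmod]) hDnew
          calc (Spar a b c d).ncard = (Spar a b (c - k*a) (d - k*b)).ncard := hshear.symm
            _ = (a * (d - k*b) - b * (c - k*a)).toNat := hrec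
            _ = (a * d - b * c).toNat := by congr 1; ring

end SparAux

theorem stmt_2 (p1 q1 p2 q2 : ℕ) (hp1 : 0 < p1) (hq2 : 0 < q2)
    (hD : q1 * p2 < p1 * q2) :
    {pos : ℕ × ℕ | inTQ p1 q1 p2 q2 pos}.Finite ∧
      {pos : ℕ × ℕ | inTQ p1 q1 p2 q2 pos}.ncard = p1 * q2 - q1 * p2 := by
  have hDZ : 0 < (p1 : ℤ) * q2 - (q1 : ℤ) * p2 := by
    have : ((q1 * p2 : ℕ) : ℤ) < ((p1 * q2 : ℕ) : ℤ) := by exact_mod_cast hD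
    push_cast at this
    linarith
  set T : Set (ℕ × ℕ) := {pos : ℕ × ℕ | inTQ p1 q1 p2 q2 pos} with hT
  have himg : Spar (p1 : ℤ) (q1 : ℤ) (p2 : ℤ) (q2 : ℤ)
      = (fun p : ℕ × ℕ => ((p.1 : ℤ), (p.2 : ℤ))) '' T := by
    ext ⟨X, Y⟩
    constructor
    · rintro ⟨h1, h2, h3, h4⟩
      dsimp only at h1 h2 h3 h4
      have hp2 : (0:ℤ) ≤ (p2:ℤ) := Int.natCast_nonneg p2
      have hp1' : (0:ℤ) ≤ (p1:ℤ) := Int.natCast_nonneg p1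
      have hX : 0 ≤ X := by nlinarith
      have hY : 0 ≤ Y := by
        have hq1 : (0:ℤ) ≤ (q1:ℤ) := Int.natCast_nonneg q1
        have hq2' : (0:ℤ) ≤ (q2:ℤ) := Int.natCast_nonneg q2
        nlinarith
      rcases Int.eq_ofNat_of_zero_le hX with ⟨x, rfl⟩
      rcases Int.eq_ofNat_of_zero_le hY with ⟨y, rfl⟩
      refine ⟨(x, y), ⟨⟨?_, ?_⟩, ?_, ?_⟩, rfl⟩
      · show x * q1 ≤ y * p1
        zify; linarith
      · show y * p2 ≤ x * q2
        zify; linarith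
      · show (p1 : ℤ) * ((y : ℤ) - (q2 : ℤ)) < (q1 : ℤ) * ((x : ℤ) - (p2 : ℤ))
        push_cast; linarith
      · show (p2 : ℤ) * ((y : ℤ) - (q1 : ℤ)) > (q2 : ℤ) * ((x : ℤ) - (p1 : ℤ))
        push_cast; linarith
    · rintro ⟨⟨x, y⟩, ⟨⟨hb1, hb2⟩, ht1, ht2⟩, hpr⟩
      dsimp only at hb1 hb2 ht1 ht2
      have hXx : (X : ℤ) = (x : ℤ) ∧ (Y : ℤ) = (y : ℤ) := by
        constructor
        · exact (congrArg Prod.fst hpr).symm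
        · exact (congrArg Prod.snd hpr).symm
      obtain ⟨hX, hY⟩ := hXx
      subst hX; subst hY
      have hb1' : (x : ℤ) * q1 ≤ (y : ℤ) * p1 := by exact_mod_cast hb1
      have hb2' : (y : ℤ) * p2 ≤ (x : ℤ) * q2 := by exact_mod_cast hb2
      refine ⟨by dsimp only; linarith, by dsimp only; linarith,
        by dsimp only; linarith, by dsimp only; linarith⟩
  have hinj : Set.InjOn (fun p : ℕ × ℕ => ((p.1 : ℤ), (p.2 : ℤ))) T := by
    rintro ⟨a1, a2⟩ _ ⟨b1, b2⟩ _ h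
    simp only [Prod.mk.injEq, Nat.cast_inj] at h
    exact Prod.ext h.1 h.2
  have hfin : T.Finite := by
    apply Set.Finite.of_finite_image _ hinj
    rw [← himg]
    exact Spar_finite hDZ
  refine ⟨hfin, ?_⟩
  have hkey := key ((q1:ℤ).natAbs + (q2:ℤ).natAbs) (p1:ℤ) (q1:ℤ) (p2:ℤ) (q2:ℤ) le_rfl hDZ
  rw [himg, Set.ncard_image_of_injOn hinj] at hkey
  rw [hkey]
  rw [show ((p1:ℤ) * q2 - (q1:ℤ) * p2) = ((p1*q2 : ℕ) : ℤ) - ((q1*p2 : ℕ) : ℤ) by push_cast; ring]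
  exact Int.toNat_sub (p1*q2) (q1*p2)
end

section
/- Let (x,y) ∈ T_Q and let A, B be integers. Then the pair (x + A·p₁ + B·p₂, y + A·q₁ + B·q₂) lies in B_Q (in particular both coordinates are nonnegative) if and only if A ≥ 0 and B ≥ 0. -/
theorem stmt_3 (p1 q1 p2 q2 : ℕ) (hp1 : 0 < p1) (hq2 : 0 < q2)
    (hD : q1 * p2 < p1 * q2)
    (x y : ℕ) (hxy : inTQ p1 q1 p2 q2 (x, y)) (A B : ℤ) :
    (0 ≤ (x : ℤ) + A * p1 + B * p2 ∧ 0 ≤ (y : ℤ) + A * q1 + B * q2 ∧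
      ((x : ℤ) + A * p1 + B * p2) * q1 ≤ ((y : ℤ) + A * q1 + B * q2) * p1 ∧
      ((y : ℤ) + A * q1 + B * q2) * p2 ≤ ((x : ℤ) + A * p1 + B * p2) * q2) ↔
    (0 ≤ A ∧ 0 ≤ B) := by
  obtain ⟨⟨h1, h2⟩, h3, h4⟩ := hxy
  simp only [inTQ, inBQ] at *
  have h1' : (x : ℤ) * q1 ≤ (y : ℤ) * p1 := by exact_mod_cast h1
  have h2' : (y : ℤ) * p2 ≤ (x : ℤ) * q2 := by exact_mod_cast h2
  have hD' : (0 : ℤ) < (p1 : ℤ) * q2 - (q1 : ℤ) * p2 := by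
    have : (q1 : ℤ) * p2 < (p1 : ℤ) * q2 := by exact_mod_cast hD
    linarith
  have hp1' : (0 : ℤ) ≤ (p1 : ℤ) := Int.natCast_nonneg _
  have hq1' : (0 : ℤ) ≤ (q1 : ℤ) := Int.natCast_nonneg _
  have hp2' : (0 : ℤ) ≤ (p2 : ℤ) := Int.natCast_nonneg _
  have hq2' : (0 : ℤ) ≤ (q2 : ℤ) := Int.natCast_nonneg _
  constructor
  · rintro ⟨hX, hY, hq, hp⟩
    constructor
    · by_contra h
      push_neg at h
      have hA : A ≤ -1 := by linarith
      have := mul_le_mul_of_nonneg_right hA hD'.le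
      nlinarith [hp, h4, this]
    · by_contra h
      push_neg at h
      have hB : B ≤ -1 := by linarith
      have := mul_le_mul_of_nonneg_right hB hD'.le
      nlinarith [hq, h3, this]
  · rintro ⟨hA, hB⟩
    refine ⟨?_, ?_, ?_, ?_⟩
    · nlinarith [mul_nonneg hA hp1', mul_nonneg hB hp2']
    · nlinarith [mul_nonneg hA hq1', mul_nonneg hB hq2']
    · have hB' : 0 ≤ B * ((p1 : ℤ) * q2 - (q1 : ℤ) * p2) := mul_nonneg hB hD'.le
      linarith [hB', h1']
    · have hA' : 0 ≤ A * ((p1 : ℤ) * q2 - (q1 : ℤ) * p2) := mul_nonneg hA hD'.le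
      linarith [hA', h2']
end

section
/- Every position (X,Y) ∈ B_Q can be written as (X,Y) = (x + A·p₁ + B·p₂, y + A·q₁ + B·q₂) for some (x,y) ∈ T_Q and some nonnegative integers A and B, and this representation is unique: if (x + A·p₁ + B·p₂, y + A·q₁ + B·q₂) = (x' + A'·p₁ + B'·p₂, y' + A'·q₁ + B'·q₂) with (x,y),(x',y') ∈ T_Q and A,B,A',B' ∈ ℕ, then (x,y) = (x',y'), A = A' and B = B'. -/
set_option maxHeartbeats 1000000 in
theorem stmt_4 (p1 q1 p2 q2 : ℕ) (hp1 : 0 < p1) (hq2 : 0 < q2)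
    (hD : q1 * p2 < p1 * q2)
    (X Y : ℕ) (hXY : inBQ p1 q1 p2 q2 (X, Y)) :
    (∃ x y A B : ℕ, inTQ p1 q1 p2 q2 (x, y) ∧
        X = x + A * p1 + B * p2 ∧ Y = y + A * q1 + B * q2) ∧
      (∀ x y A B x' y' A' B' : ℕ,
        inTQ p1 q1 p2 q2 (x, y) → inTQ p1 q1 p2 q2 (x', y') →
        X = x + A * p1 + B * p2 → Y = y + A * q1 + B * q2 →
        X = x' + A' * p1 + B' * p2 → Y = y' + A' * q1 + B' * q2 →
        x = x' ∧ y = y' ∧ A = A' ∧ B = B') := by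
  simp only [inBQ] at hXY
  obtain ⟨h1, h2⟩ := hXY
  have hDpos : (0:ℤ) < (p1:ℤ)*q2 - q1*p2 := by
    have : ((q1*p2 : ℕ) : ℤ) < ((p1*q2 : ℕ) : ℤ) := by exact_mod_cast hD
    push_cast at this; linarith
  constructor
  · -- existence
    have hu : (0:ℤ) ≤ (X:ℤ)*q2 - Y*p2 := by
      have : ((Y*p2 : ℕ) : ℤ) ≤ ((X*q2 : ℕ) : ℤ) := by exact_mod_cast h2
      push_cast at this; linarith
    have hv : (0:ℤ) ≤ (Y:ℤ)*p1 - X*q1 := by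
      have : ((X*q1 : ℕ) : ℤ) ≤ ((Y*p1 : ℕ) : ℤ) := by exact_mod_cast h1
      push_cast at this; linarith
    obtain ⟨A, r, hAr, hA0, hr0, hrD⟩ :
        ∃ A r : ℤ, (X:ℤ)*q2 - Y*p2 = ((p1:ℤ)*q2 - q1*p2)*A + r ∧
          0 ≤ A ∧ 0 ≤ r ∧ r < (p1:ℤ)*q2 - q1*p2 := by
      refine ⟨((X:ℤ)*q2 - Y*p2) / ((p1:ℤ)*q2 - q1*p2),
        ((X:ℤ)*q2 - Y*p2) % ((p1:ℤ)*q2 - q1*p2), ?_,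
        Int.ediv_nonneg hu hDpos.le, Int.emod_nonneg _ hDpos.ne',
        Int.emod_lt_of_pos _ hDpos⟩
      linarith [Int.mul_ediv_add_emod ((X:ℤ)*q2 - Y*p2) ((p1:ℤ)*q2 - q1*p2)]
    obtain ⟨B, s, hBs, hB0, hs0, hsD⟩ :
        ∃ B s : ℤ, (Y:ℤ)*p1 - X*q1 = ((p1:ℤ)*q2 - q1*p2)*B + s ∧
          0 ≤ B ∧ 0 ≤ s ∧ s < (p1:ℤ)*q2 - q1*p2 := by
      refine ⟨((Y:ℤ)*p1 - X*q1) / ((p1:ℤ)*q2 - q1*p2),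
        ((Y:ℤ)*p1 - X*q1) % ((p1:ℤ)*q2 - q1*p2), ?_,
        Int.ediv_nonneg hv hDpos.le, Int.emod_nonneg _ hDpos.ne',
        Int.emod_lt_of_pos _ hDpos⟩
      linarith [Int.mul_ediv_add_emod ((Y:ℤ)*p1 - X*q1) ((p1:ℤ)*q2 - q1*p2)]
    set xz : ℤ := (X:ℤ) - A*p1 - B*p2 with hxzdef
    set yz : ℤ := (Y:ℤ) - A*q1 - B*q2 with hyzdef
    have keyx : ((p1:ℤ)*q2 - q1*p2) * xz = r*p1 + s*p2 := by
      rw [hxzdef]; linear_combination (p1:ℤ) * hAr + (p2:ℤ) * hBs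
    have keyy : ((p1:ℤ)*q2 - q1*p2) * yz = r*q1 + s*q2 := by
      rw [hyzdef]; linear_combination (q1:ℤ) * hAr + (q2:ℤ) * hBs
    have hp1' : (0:ℤ) ≤ p1 := Int.natCast_nonneg _
    have hp2' : (0:ℤ) ≤ p2 := Int.natCast_nonneg _
    have hq1' : (0:ℤ) ≤ q1 := Int.natCast_nonneg _
    have hq2' : (0:ℤ) ≤ q2 := Int.natCast_nonneg _
    have hxz0 : 0 ≤ xz := by
      have h0 : ((p1:ℤ)*q2 - q1*p2) * 0 ≤ ((p1:ℤ)*q2 - q1*p2) * xz := by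
        rw [keyx, mul_zero]
        exact add_nonneg (mul_nonneg hr0 hp1') (mul_nonneg hs0 hp2')
      exact nonneg_of_mul_nonneg_right (by rwa [mul_zero] at h0) hDpos
    have hyz0 : 0 ≤ yz := by
      have h0 : (0:ℤ) ≤ ((p1:ℤ)*q2 - q1*p2) * yz := by
        rw [keyy]
        exact add_nonneg (mul_nonneg hr0 hq1') (mul_nonneg hs0 hq2')
      exact nonneg_of_mul_nonneg_right h0 hDpos
    have key1 : xz*q2 - yz*p2 = r := by
      rw [hxzdef, hyzdef]; linear_combination hAr
    have key2 : yz*p1 - xz*q1 = s := by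
      rw [hxzdef, hyzdef]; linear_combination hBs
    refine ⟨xz.toNat, yz.toNat, A.toNat, B.toNat, ⟨⟨?_, ?_⟩, ?_, ?_⟩, ?_, ?_⟩
    · have h' : (xz.toNat : ℤ) * q1 ≤ (yz.toNat : ℤ) * p1 := by
        rw [Int.toNat_of_nonneg hxz0, Int.toNat_of_nonneg hyz0]; linarith
      exact_mod_cast h'
    · have h' : (yz.toNat : ℤ) * p2 ≤ (xz.toNat : ℤ) * q2 := by
        rw [Int.toNat_of_nonneg hxz0, Int.toNat_of_nonneg hyz0]; linarith
      exact_mod_cast h'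
    · simp only [Int.toNat_of_nonneg hxz0, Int.toNat_of_nonneg hyz0]
      linarith
    · simp only [Int.toNat_of_nonneg hxz0, Int.toNat_of_nonneg hyz0]
      linarith
    · have h' : (X:ℤ) = (xz.toNat:ℤ) + (A.toNat:ℤ) * p1 + (B.toNat:ℤ) * p2 := by
        rw [Int.toNat_of_nonneg hxz0, Int.toNat_of_nonneg hA0, Int.toNat_of_nonneg hB0,
          hxzdef]; ring
      exact_mod_cast h'
    · have h' : (Y:ℤ) = (yz.toNat:ℤ) + (A.toNat:ℤ) * q1 + (B.toNat:ℤ) * q2 := by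
        rw [Int.toNat_of_nonneg hyz0, Int.toNat_of_nonneg hA0, Int.toNat_of_nonneg hB0,
          hyzdef]; ring
      exact_mod_cast h'
  · -- uniqueness
    rintro x y A B x' y' A' B' ⟨⟨t1, t2⟩, t3, t4⟩ ⟨⟨t1', t2'⟩, t3', t4'⟩ e1 e2 e3 e4
    simp only at t1 t2 t3 t4 t1' t2' t3' t4'
    have e1' : (X:ℤ) = x + A * p1 + B * p2 := by exact_mod_cast e1
    have e2' : (Y:ℤ) = y + A * q1 + B * q2 := by exact_mod_cast e2
    have e3' : (X:ℤ) = x' + A' * p1 + B' * p2 := by exact_mod_cast e3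
    have e4' : (Y:ℤ) = y' + A' * q1 + B' * q2 := by exact_mod_cast e4
    have t1z : (x:ℤ) * q1 ≤ y * p1 := by exact_mod_cast t1
    have t2z : (y:ℤ) * p2 ≤ x * q2 := by exact_mod_cast t2
    have t1z' : (x':ℤ) * q1 ≤ y' * p1 := by exact_mod_cast t1'
    have t2z' : (y':ℤ) * p2 ≤ x' * q2 := by exact_mod_cast t2'
    have r1 : (0:ℤ) ≤ (x:ℤ)*q2 - y*p2 := by linarith
    have r2 : (x:ℤ)*q2 - y*p2 < (p1:ℤ)*q2 - q1*p2 := by linarith [t4]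
    have s1 : (0:ℤ) ≤ (y:ℤ)*p1 - x*q1 := by linarith
    have s2 : (y:ℤ)*p1 - x*q1 < (p1:ℤ)*q2 - q1*p2 := by linarith [t3]
    have r1' : (0:ℤ) ≤ (x':ℤ)*q2 - y'*p2 := by linarith
    have r2' : (x':ℤ)*q2 - y'*p2 < (p1:ℤ)*q2 - q1*p2 := by linarith [t4']
    have s1' : (0:ℤ) ≤ (y':ℤ)*p1 - x'*q1 := by linarith
    have s2' : (y':ℤ)*p1 - x'*q1 < (p1:ℤ)*q2 - q1*p2 := by linarith [t3']
    have hA : ((x:ℤ)*q2 - y*p2) + A * ((p1:ℤ)*q2 - q1*p2)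
        = ((x':ℤ)*q2 - y'*p2) + A' * ((p1:ℤ)*q2 - q1*p2) := by
      linear_combination (q2:ℤ) * e3' - (q2:ℤ) * e1' + (p2:ℤ) * e2' - (p2:ℤ) * e4'
    have hB : ((y:ℤ)*p1 - x*q1) + B * ((p1:ℤ)*q2 - q1*p2)
        = ((y':ℤ)*p1 - x'*q1) + B' * ((p1:ℤ)*q2 - q1*p2) := by
      linear_combination (p1:ℤ) * e4' - (p1:ℤ) * e2' + (q1:ℤ) * e1' - (q1:ℤ) * e3'
    have hAA : (A:ℤ) = A' := by
      rcases lt_trichotomy (A:ℤ) (A':ℤ) with h | h | h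
      · exfalso
        have h' : (A:ℤ) + 1 ≤ A' := by linarith
        have := mul_nonneg (by linarith : (0:ℤ) ≤ (A':ℤ) - A - 1) hDpos.le
        linarith
      · exact h
      · exfalso
        have h' : (A':ℤ) + 1 ≤ A := by linarith
        have := mul_nonneg (by linarith : (0:ℤ) ≤ (A:ℤ) - A' - 1) hDpos.le
        linarith
    have hBB : (B:ℤ) = B' := by
      rcases lt_trichotomy (B:ℤ) (B':ℤ) with h | h | h
      · exfalso
        have h' : (B:ℤ) + 1 ≤ B' := by linarith
        have := mul_nonneg (by linarith : (0:ℤ) ≤ (B':ℤ) - B - 1) hDpos.le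
        linarith
      · exact h
      · exfalso
        have h' : (B':ℤ) + 1 ≤ B := by linarith
        have := mul_nonneg (by linarith : (0:ℤ) ≤ (B:ℤ) - B' - 1) hDpos.le
        linarith
    have hAn : A = A' := by exact_mod_cast hAA
    have hBn : B = B' := by exact_mod_cast hBB
    have hx : (x:ℤ) = x' := by rw [hAA, hBB] at e1'; linarith
    have hy : (y:ℤ) = y' := by rw [hAA, hBB] at e2'; linarith
    exact ⟨by exact_mod_cast hx, by exact_mod_cast hy, hAn, hBn⟩
end

section
/- Let M ⊆ ℕ² \ {(0,0)} and suppose there is a legal move in the Q-subtraction game G_Q(M) from (X,Y) ∈ B_Q via some (s,t) ∈ M. Write (X,Y) = (x + A·p₁ + B·p₂, y + A·q₁ + B·q₂) with (x,y) ∈ T_Q and A,B ∈ ℕ (such a representation exists and is unique). Then A ≥ s and B ≥ t, so (A,B) → (A−s, B−t) is a legal move in the subtraction game G(M), and the target of the move from (X,Y) equals (x + (A−s)·p₁ + (B−t)·p₂, y + (A−s)·q₁ + (B−t)·q₂). -/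
set_option maxHeartbeats 1000000 in
theorem stmt_6 (p1 q1 p2 q2 : ℕ) (hp1 : 0 < p1) (hq2 : 0 < q2)
    (hD : q1 * p2 < p1 * q2)
    (M : Set (ℕ × ℕ)) (hM : (0, 0) ∉ M)
    (X Y : ℕ) (hXY : inBQ p1 q1 p2 q2 (X, Y))
    (s t : ℕ) (hst : (s, t) ∈ M)
    (hs : p1 * s + p2 * t ≤ X) (ht : q1 * s + q2 * t ≤ Y)
    (htarget : inBQ p1 q1 p2 q2 (X - (p1 * s + p2 * t), Y - (q1 * s + q2 * t)))
    (x y A B : ℕ) (hxy : inTQ p1 q1 p2 q2 (x, y))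
    (hX : X = x + A * p1 + B * p2) (hY : Y = y + A * q1 + B * q2) :
    s ≤ A ∧ t ≤ B ∧
      X - (p1 * s + p2 * t) = x + (A - s) * p1 + (B - t) * p2 ∧
      Y - (q1 * s + q2 * t) = y + (A - s) * q1 + (B - t) * q2 := by

  obtain ⟨⟨hB1, hB2⟩, hT1, hT2⟩ := hxy
  obtain ⟨ht1, ht2⟩ := htarget
  simp only [inBQ] at ht1 ht2
  have hXz : (X:ℤ) = x + A*p1 + B*p2 := by exact_mod_cast hX
  have hYz : (Y:ℤ) = y + A*q1 + B*q2 := by exact_mod_cast hY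
  have hDz : (0:ℤ) < (p1:ℤ)*q2 - q1*p2 := by
    have : (q1*p2 : ℤ) < (p1*q2 : ℤ) := by exact_mod_cast hD
    linarith
  have ha0 : (0:ℤ) ≤ (x:ℤ)*q2 - y*p2 := by
    have : ((y:ℤ)*p2) ≤ (x:ℤ)*q2 := by exact_mod_cast hB2
    linarith
  have ha1 : (x:ℤ)*q2 - y*p2 < (p1:ℤ)*q2 - q1*p2 := by linarith [hT2, mul_sub (p2:ℤ) (y:ℤ) (q1:ℤ)]
  have hb0 : (0:ℤ) ≤ (y:ℤ)*p1 - x*q1 := by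
    have : ((x:ℤ)*q1) ≤ (y:ℤ)*p1 := by exact_mod_cast hB1
    linarith
  have hb1 : (y:ℤ)*p1 - x*q1 < (p1:ℤ)*q2 - q1*p2 := by linarith [hT1]
  have hc1 : ((X - (p1*s+p2*t) : ℕ) : ℤ) = (X:ℤ) - ((p1:ℤ)*s+(p2:ℤ)*t) := by
    rw [Nat.cast_sub hs]; push_cast; ring
  have hc2 : ((Y - (q1*s+q2*t) : ℕ) : ℤ) = (Y:ℤ) - ((q1:ℤ)*s+(q2:ℤ)*t) := by
    rw [Nat.cast_sub ht]; push_cast; ring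
  have h2 : ((Y:ℤ) - ((q1:ℤ)*s+(q2:ℤ)*t)) * p2 ≤ ((X:ℤ) - ((p1:ℤ)*s+(p2:ℤ)*t)) * q2 := by
    rw [← hc1, ← hc2]; exact_mod_cast ht2
  have h1 : ((X:ℤ) - ((p1:ℤ)*s+(p2:ℤ)*t)) * q1 ≤ ((Y:ℤ) - ((q1:ℤ)*s+(q2:ℤ)*t)) * p1 := by
    rw [← hc1, ← hc2]; exact_mod_cast ht1
  have hsA : s ≤ A := by
    by_contra h
    push_neg at h
    have h3 : (A:ℤ) + 1 ≤ s := by exact_mod_cast h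
    have h4 : ((A:ℤ)+1) * ((p1:ℤ)*q2 - q1*p2) ≤ (s:ℤ) * ((p1:ℤ)*q2 - q1*p2) :=
      mul_le_mul_of_nonneg_right h3 (le_of_lt hDz)
    rw [hXz, hYz] at h2
    nlinarith [h2, ha1, h4]
  have htB : t ≤ B := by
    by_contra h
    push_neg at h
    have h3 : (B:ℤ) + 1 ≤ t := by exact_mod_cast h
    have h4 : ((B:ℤ)+1) * ((p1:ℤ)*q2 - q1*p2) ≤ (t:ℤ) * ((p1:ℤ)*q2 - q1*p2) :=
      mul_le_mul_of_nonneg_right h3 (le_of_lt hDz)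
    rw [hXz, hYz] at h1
    nlinarith [h1, hb1, h4]
  refine ⟨hsA, htB, ?_, ?_⟩
  · zify [hs, hsA, htB]
    linear_combination hXz
  · zify [ht, hsA, htB]
    linear_combination hYz
end

section
/- (Main theorem, first form.) Let M ⊆ ℕ² \ {(0,0)} and let (X,Y) ∈ B_Q. Then (X,Y) is a P-position of the Q-subtraction game G_Q(M) if and only if φ_Q(X,Y) is a P-position of the subtraction game G(M). -/
set_option maxHeartbeats 1000000


/-- `pos` is a P-position of the game with move relation `move`: every legal move
leads to a non-P-position.  (Every legal move of the games considered here strictly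
decreases the coordinate sum, which makes the recursion well-founded.) -/
def PPos (move : ℕ × ℕ → ℕ × ℕ → Prop) : ℕ × ℕ → Prop
  | pos => ∀ pos', move pos pos' → pos'.1 + pos'.2 < pos.1 + pos.2 → ¬ PPos move pos'
termination_by pos => pos.1 + pos.2

/-- The map `φ_Q`, using floor division of integers. -/
def phiQ (p1 q1 p2 q2 : ℕ) (pos : ℕ × ℕ) : ℤ × ℤ :=
  (Int.fdiv ((pos.1 : ℤ) * q2 - (pos.2 : ℤ) * p2) ((p1 : ℤ) * q2 - (q1 : ℤ) * p2),
   Int.fdiv ((pos.2 : ℤ) * p1 - (pos.1 : ℤ) * q1) ((p1 : ℤ) * q2 - (q1 : ℤ) * p2))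

lemma PPos_iff (move : ℕ × ℕ → ℕ × ℕ → Prop) (pos : ℕ × ℕ) :
    PPos move pos ↔ ∀ pos', move pos pos' → pos'.1 + pos'.2 < pos.1 + pos.2 → ¬ PPos move pos' := by
  rw [PPos]

lemma gmove_iff (M : Set (ℕ × ℕ)) (A B : ℕ) (pos' : ℕ × ℕ) :
    QMove 1 0 0 1 M (A, B) pos' ↔
      ∃ s t : ℕ, (s, t) ∈ M ∧ s ≤ A ∧ t ≤ B ∧ pos' = (A - s, B - t) := by
  constructor
  · rintro ⟨s, t, hst, h1, h2, h3, h4, -⟩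
    exact ⟨s, t, hst, by simpa using h1, by simpa using h2,
      by simp at h3 h4; exact Prod.ext h3 h4⟩
  · rintro ⟨s, t, hst, hs, ht, rfl⟩
    exact ⟨s, t, hst, by simpa, by simpa, by simp, by simp, by simp [inBQ]⟩

lemma main_aux (p1 q1 p2 q2 : ℕ) (hp1 : 0 < p1) (hq2 : 0 < q2)
    (hD : q1 * p2 < p1 * q2) (M : Set (ℕ × ℕ)) (hM : (0, 0) ∉ M) :
    ∀ n X Y, X + Y = n → inBQ p1 q1 p2 q2 (X, Y) →
      (PPos (QMove p1 q1 p2 q2 M) (X, Y) ↔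
        PPos (QMove 1 0 0 1 M)
          ((phiQ p1 q1 p2 q2 (X, Y)).1.toNat, (phiQ p1 q1 p2 q2 (X, Y)).2.toNat)) := by
  intro n
  induction n using Nat.strong_induction_on with
  | _ n ih =>
  intro X Y hn hXY
  have hDpos : (0 : ℤ) < (p1 : ℤ) * q2 - (q1 : ℤ) * p2 := by
    have : (q1 : ℤ) * p2 < (p1 : ℤ) * q2 := by exact_mod_cast hD
    omega
  set D : ℤ := (p1 : ℤ) * q2 - (q1 : ℤ) * p2 with hDdef
  -- integer "numerators"
  have hN1 : (0 : ℤ) ≤ (X : ℤ) * q2 - (Y : ℤ) * p2 := by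
    have := hXY.2; simp only at this
    have : (Y : ℤ) * p2 ≤ (X : ℤ) * q2 := by exact_mod_cast this
    omega
  have hN2 : (0 : ℤ) ≤ (Y : ℤ) * p1 - (X : ℤ) * q1 := by
    have := hXY.1; simp only at this
    have : (X : ℤ) * q1 ≤ (Y : ℤ) * p1 := by exact_mod_cast this
    omega
  set N1 : ℤ := (X : ℤ) * q2 - (Y : ℤ) * p2 with hN1def
  set N2 : ℤ := (Y : ℤ) * p1 - (X : ℤ) * q1 with hN2def
  set a : ℕ := (phiQ p1 q1 p2 q2 (X, Y)).1.toNat with hadef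
  set b : ℕ := (phiQ p1 q1 p2 q2 (X, Y)).2.toNat with hbdef
  have hphi1 : (phiQ p1 q1 p2 q2 (X, Y)).1 = N1 / D := by
    simp only [phiQ]; exact Int.fdiv_eq_ediv_of_nonneg _ hDpos.le
  have hphi2 : (phiQ p1 q1 p2 q2 (X, Y)).2 = N2 / D := by
    simp only [phiQ]; exact Int.fdiv_eq_ediv_of_nonneg _ hDpos.le
  have ha : (a : ℤ) = N1 / D := by
    rw [hadef, hphi1]; exact Int.toNat_of_nonneg (Int.ediv_nonneg hN1 hDpos.le)
  have hb : (b : ℤ) = N2 / D := by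
    rw [hbdef, hphi2]; exact Int.toNat_of_nonneg (Int.ediv_nonneg hN2 hDpos.le)
  have hsA : ∀ s : ℕ, ((s : ℤ) * D ≤ N1 ↔ s ≤ a) := by
    intro s
    rw [← Int.le_ediv_iff_mul_le hDpos, ← ha]
    exact_mod_cast Iff.rfl
  have htB : ∀ t : ℕ, ((t : ℤ) * D ≤ N2 ↔ t ≤ b) := by
    intro t
    rw [← Int.le_ediv_iff_mul_le hDpos, ← hb]
    exact_mod_cast Iff.rfl
  have hXD : (X : ℤ) * D = p1 * N1 + p2 * N2 := by rw [hDdef, hN1def, hN2def]; ring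
  have hYD : (Y : ℤ) * D = q1 * N1 + q2 * N2 := by rw [hDdef, hN1def, hN2def]; ring
  -- phi of a moved position
  have hphi_move : ∀ (s t : ℕ) (pos' : ℕ × ℕ),
      p1 * s + p2 * t ≤ X → q1 * s + q2 * t ≤ Y →
      pos'.1 = X - (p1 * s + p2 * t) → pos'.2 = Y - (q1 * s + q2 * t) →
      (phiQ p1 q1 p2 q2 pos').1 = N1 / D - s ∧ (phiQ p1 q1 p2 q2 pos').2 = N2 / D - t := by
    intro s t pos' hu hv h1 h2
    have c1 : (pos'.1 : ℤ) = (X : ℤ) - (p1 * s + p2 * t) := by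
      rw [h1]; push_cast [Nat.cast_sub hu]; ring
    have c2 : (pos'.2 : ℤ) = (Y : ℤ) - (q1 * s + q2 * t) := by
      rw [h2]; push_cast [Nat.cast_sub hv]; ring
    have e1 : (pos'.1 : ℤ) * q2 - (pos'.2 : ℤ) * p2 = N1 + D * (-(s : ℤ)) := by
      rw [c1, c2, hN1def, hDdef]; ring
    have e2 : (pos'.2 : ℤ) * p1 - (pos'.1 : ℤ) * q1 = N2 + D * (-(t : ℤ)) := by
      rw [c1, c2, hN2def, hDdef]; ring
    constructor
    · show Int.fdiv _ _ = _
      rw [show ((p1 : ℤ) * q2 - (q1 : ℤ) * p2) = D from (hDdef).symm,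
        Int.fdiv_eq_ediv_of_nonneg _ hDpos.le, e1, Int.add_mul_ediv_left _ _ hDpos.ne']
      ring
    · show Int.fdiv _ _ = _
      rw [show ((p1 : ℤ) * q2 - (q1 : ℤ) * p2) = D from (hDdef).symm,
        Int.fdiv_eq_ediv_of_nonneg _ hDpos.le, e2, Int.add_mul_ediv_left _ _ hDpos.ne']
      ring
  rw [PPos_iff, PPos_iff]
  constructor
  · -- Q-game P-position → G-game P-position
    intro hP pos'' hmove hlt hPP
    rw [gmove_iff] at hmove
    obtain ⟨s, t, hst, hs, ht, rfl⟩ := hmove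
    -- build the corresponding Q-move
    have hsD : (s : ℤ) * D ≤ N1 := (hsA s).mpr hs
    have htD : (t : ℤ) * D ≤ N2 := (htB t).mpr ht
    have hu : p1 * s + p2 * t ≤ X := by
      have h : ((p1 * s + p2 * t : ℕ) : ℤ) * D ≤ (X : ℤ) * D := by
        rw [hXD]
        push_cast
        have hh1 : (p1 : ℤ) * ((s : ℤ) * D) ≤ (p1 : ℤ) * N1 :=
          mul_le_mul_of_nonneg_left hsD (by positivity)
        have hh2 : (p2 : ℤ) * ((t : ℤ) * D) ≤ (p2 : ℤ) * N2 :=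
          mul_le_mul_of_nonneg_left htD (by positivity)
        linarith [hh1, hh2]
      have := le_of_mul_le_mul_right h hDpos
      exact_mod_cast this
    have hv : q1 * s + q2 * t ≤ Y := by
      have h : ((q1 * s + q2 * t : ℕ) : ℤ) * D ≤ (Y : ℤ) * D := by
        rw [hYD]
        push_cast
        have hh1 : (q1 : ℤ) * ((s : ℤ) * D) ≤ (q1 : ℤ) * N1 :=
          mul_le_mul_of_nonneg_left hsD (by positivity)
        have hh2 : (q2 : ℤ) * ((t : ℤ) * D) ≤ (q2 : ℤ) * N2 :=
          mul_le_mul_of_nonneg_left htD (by positivity)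
        linarith [hh1, hh2]
      have := le_of_mul_le_mul_right h hDpos
      exact_mod_cast this
    set pos' : ℕ × ℕ := (X - (p1 * s + p2 * t), Y - (q1 * s + q2 * t)) with hpos'
    have c1 : (pos'.1 : ℤ) = (X : ℤ) - (p1 * s + p2 * t) := by
      simp only [hpos']; push_cast [Nat.cast_sub hu]; ring
    have c2 : (pos'.2 : ℤ) = (Y : ℤ) - (q1 * s + q2 * t) := by
      simp only [hpos']; push_cast [Nat.cast_sub hv]; ring
    have hBQ' : inBQ p1 q1 p2 q2 pos' := by
      constructor
      · have : (pos'.1 : ℤ) * q1 ≤ (pos'.2 : ℤ) * p1 := by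
          rw [c1, c2]
          have : (0 : ℤ) ≤ N2 - (t : ℤ) * D := by omega
          rw [hN2def, hDdef] at this
          linarith [this]
        exact_mod_cast this
      · have : (pos'.2 : ℤ) * p2 ≤ (pos'.1 : ℤ) * q2 := by
          rw [c1, c2]
          have : (0 : ℤ) ≤ N1 - (s : ℤ) * D := by omega
          rw [hN1def, hDdef] at this
          linarith [this]
        exact_mod_cast this
    have hQmove : QMove p1 q1 p2 q2 M (X, Y) pos' :=
      ⟨s, t, hst, hu, hv, rfl, rfl, hBQ'⟩
    have hstpos : 0 < s + t := by
      rcases Nat.eq_zero_or_pos (s + t) with h | h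
      · exfalso; have hs0 : s = 0 := by omega
        have ht0 : t = 0 := by omega
        rw [hs0, ht0] at hst; exact hM hst
      · exact h
    have hsum : pos'.1 + pos'.2 < X + Y := by
      have : 0 < (p1 * s + p2 * t) + (q1 * s + q2 * t) := by
        rcases Nat.eq_zero_or_pos s with hs0 | hs0
        · have : 0 < t := by omega
          have : 0 < q2 * t := Nat.mul_pos hq2 this
          omega
        · have : 0 < p1 * s := Nat.mul_pos hp1 hs0
          omega
      simp only [hpos']; omega
    have hnotP := hP pos' hQmove (by simpa [hn] using hsum)
    -- transfer via induction hypothesis at pos'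
    have hphis := hphi_move s t pos' hu hv rfl rfl
    have hihp := ih (pos'.1 + pos'.2) (by omega) pos'.1 pos'.2 rfl hBQ'
    simp only [Prod.mk.eta] at hihp
    apply hnotP
    rw [hihp]
    have e1 : (phiQ p1 q1 p2 q2 pos').1.toNat = a - s := by
      have := hphis.1; rw [this]; omega
    have e2 : (phiQ p1 q1 p2 q2 pos').2.toNat = b - t := by
      have := hphis.2; rw [this]; omega
    rw [show (pos'.1, pos'.2) = pos' from rfl] at *
    rw [e1, e2]
    exact hPP
  · -- G-game P-position → Q-game P-position
    intro hP pos' hmove hlt hPP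
    obtain ⟨s, t, hst, hu, hv, h1, h2, hBQ'⟩ := hmove
    simp only at hu hv h1 h2
    -- s ≤ a, t ≤ b
    have c1 : (pos'.1 : ℤ) = (X : ℤ) - (p1 * s + p2 * t) := by
      rw [h1]; push_cast [Nat.cast_sub hu]; ring
    have c2 : (pos'.2 : ℤ) = (Y : ℤ) - (q1 * s + q2 * t) := by
      rw [h2]; push_cast [Nat.cast_sub hv]; ring
    have hsD : (s : ℤ) * D ≤ N1 := by
      have h := hBQ'.2
      have h' : (pos'.2 : ℤ) * p2 ≤ (pos'.1 : ℤ) * q2 := by exact_mod_cast h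
      rw [c1, c2] at h'
      rw [hN1def, hDdef]; linarith [h']
    have htD : (t : ℤ) * D ≤ N2 := by
      have h := hBQ'.1
      have h' : (pos'.1 : ℤ) * q1 ≤ (pos'.2 : ℤ) * p1 := by exact_mod_cast h
      rw [c1, c2] at h'
      rw [hN2def, hDdef]; linarith [h']
    have hs : s ≤ a := (hsA s).mp hsD
    have ht : t ≤ b := (htB t).mp htD
    have hGmove : QMove 1 0 0 1 M (a, b) (a - s, b - t) :=
      (gmove_iff M a b _).mpr ⟨s, t, hst, hs, ht, rfl⟩
    have hstpos : 0 < s + t := by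
      rcases Nat.eq_zero_or_pos (s + t) with h | h
      · exfalso; have hs0 : s = 0 := by omega
        have ht0 : t = 0 := by omega
        rw [hs0, ht0] at hst; exact hM hst
      · exact h
    have hnotP := hP (a - s, b - t) hGmove (by simp; omega)
    apply hnotP
    have hphis := hphi_move s t pos' hu hv h1 h2
    have hsum : pos'.1 + pos'.2 < n := by
      have : 0 < (p1 * s + p2 * t) + (q1 * s + q2 * t) := by
        rcases Nat.eq_zero_or_pos s with hs0 | hs0
        · have : 0 < t := by omega
          have : 0 < q2 * t := Nat.mul_pos hq2 this
          omega
        · have : 0 < p1 * s := Nat.mul_pos hp1 hs0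
          omega
      omega
    have hihp := ih (pos'.1 + pos'.2) hsum pos'.1 pos'.2 rfl (by
      rw [show (pos'.1, pos'.2) = pos' from rfl]; exact hBQ')
    rw [show (pos'.1, pos'.2) = pos' from rfl] at hihp
    have e1 : (phiQ p1 q1 p2 q2 pos').1.toNat = a - s := by
      have := hphis.1; rw [this]; omega
    have e2 : (phiQ p1 q1 p2 q2 pos').2.toNat = b - t := by
      have := hphis.2; rw [this]; omega
    rw [e1, e2] at hihp
    exact hihp.mp hPP


/-- The subtraction game `G(M)` is the Q-subtraction game with `p₁ = q₂ = 1`,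
`q₁ = p₂ = 0` (there the `B_Q`-constraint is vacuous). -/
theorem stmt_8 (p1 q1 p2 q2 : ℕ) (hp1 : 0 < p1) (hq2 : 0 < q2)
    (hD : q1 * p2 < p1 * q2)
    (M : Set (ℕ × ℕ)) (hM : (0, 0) ∉ M)
    (X Y : ℕ) (hXY : inBQ p1 q1 p2 q2 (X, Y)) :
    PPos (QMove p1 q1 p2 q2 M) (X, Y) ↔
      PPos (QMove 1 0 0 1 M)
        ((phiQ p1 q1 p2 q2 (X, Y)).1.toNat, (phiQ p1 q1 p2 q2 (X, Y)).2.toNat) :=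
  main_aux p1 q1 p2 q2 hp1 hq2 hD M hM (X + Y) X Y rfl hXY
end

section
/- (Main theorem, second form.) Let M ⊆ ℕ² \ {(0,0)} and let A, B be nonnegative integers. Then (A,B) is a P-position of the subtraction game G(M) if and only if for all (x,y) ∈ T_Q, the position (x + A·p₁ + B·p₂, y + A·q₁ + B·q₂) is a P-position of the Q-subtraction game G_Q(M). -/
lemma GMove_iff (M : Set (ℕ × ℕ)) (p p' : ℕ × ℕ) :
    QMove 1 0 0 1 M p p' ↔ ∃ s t : ℕ, (s, t) ∈ M ∧ s ≤ p.1 ∧ t ≤ p.2 ∧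
      p'.1 = p.1 - s ∧ p'.2 = p.2 - t := by
  simp [QMove, inBQ]

lemma inBQ_F {p1 q1 p2 q2 : ℕ} (hD : q1 * p2 ≤ p1 * q2) {x y : ℕ}
    (h : inBQ p1 q1 p2 q2 (x, y)) (a b : ℕ) :
    inBQ p1 q1 p2 q2 (x + a * p1 + b * p2, y + a * q1 + b * q2) := by
  obtain ⟨h1, h2⟩ := h
  simp only [inBQ] at *
  constructor
  · nlinarith [Nat.mul_le_mul_left b hD]
  · nlinarith [Nat.mul_le_mul_left a hD]

lemma bwd {p1 q1 p2 q2 : ℕ} (hD : q1 * p2 < p1 * q2) {x y : ℕ}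
    (hB : inBQ p1 q1 p2 q2 (x, y)) {M : Set (ℕ × ℕ)} {s t : ℕ} (hM : (s, t) ∈ M) (a b : ℕ) :
    QMove p1 q1 p2 q2 M (x + (s + a) * p1 + (t + b) * p2, y + (s + a) * q1 + (t + b) * q2)
      (x + a * p1 + b * p2, y + a * q1 + b * q2) := by
  have hle1 : p1 * s + p2 * t ≤ x + (s + a) * p1 + (t + b) * p2 := by nlinarith
  have hle2 : q1 * s + q2 * t ≤ y + (s + a) * q1 + (t + b) * q2 := by nlinarith
  refine ⟨s, t, hM, hle1, hle2, ?_, ?_, inBQ_F hD.le hB a b⟩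
  · show x + a * p1 + b * p2 = _
    rw [eq_comm, Nat.sub_eq_iff_eq_add hle1]; ring
  · show y + a * q1 + b * q2 = _
    rw [eq_comm, Nat.sub_eq_iff_eq_add hle2]; ring

lemma fwd {p1 q1 p2 q2 : ℕ} (hD : q1 * p2 < p1 * q2)
    {x y : ℕ} (hT : inTQ p1 q1 p2 q2 (x, y)) {M : Set (ℕ × ℕ)} {A B : ℕ} {pos' : ℕ × ℕ}
    (h : QMove p1 q1 p2 q2 M (x + A * p1 + B * p2, y + A * q1 + B * q2) pos') :
    ∃ s t : ℕ, (s, t) ∈ M ∧ s ≤ A ∧ t ≤ B ∧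
      pos' = (x + (A - s) * p1 + (B - t) * p2, y + (A - s) * q1 + (B - t) * q2) := by
  obtain ⟨s, t, hsM, h1, h2, e1, e2, hB1, hB2⟩ := h
  simp only at h1 h2 e1 e2
  obtain ⟨⟨hb1, hb2⟩, hu, hv⟩ := hT
  simp only at hb1 hb2 hu hv
  have e1' := e1
  have e2' := e2
  zify [h1] at e1
  zify [h2] at e2
  have hDz : (q1 : ℤ) * p2 < (p1 : ℤ) * q2 := by exact_mod_cast hD
  have hB2' : (pos'.2 : ℤ) * p2 ≤ (pos'.1 : ℤ) * q2 := by exact_mod_cast hB2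
  have hB1' : (pos'.1 : ℤ) * q1 ≤ (pos'.2 : ℤ) * p1 := by exact_mod_cast hB1
  rw [e1, e2] at hB1' hB2'
  have hvz : (y : ℤ) * p2 ≤ (x : ℤ) * q2 := by exact_mod_cast hb2
  have huz : (x : ℤ) * q1 ≤ (y : ℤ) * p1 := by exact_mod_cast hb1
  have hs : s ≤ A := by
    by_contra hc
    push_neg at hc
    have hc' : (A : ℤ) + 1 ≤ (s : ℤ) := by exact_mod_cast hc
    have h0 : (0:ℤ) ≤ ((s:ℤ) - A - 1) * ((p1:ℤ) * q2 - q1 * p2) :=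
      mul_nonneg (by linarith) (by linarith)
    linarith [hB2', hv, h0]
  have ht : t ≤ B := by
    by_contra hc
    push_neg at hc
    have hc' : (B : ℤ) + 1 ≤ (t : ℤ) := by exact_mod_cast hc
    have h0 : (0:ℤ) ≤ ((t:ℤ) - B - 1) * ((p1:ℤ) * q2 - q1 * p2) :=
      mul_nonneg (by linarith) (by linarith)
    linarith [hB1', hu, h0]
  obtain ⟨a, rfl⟩ := Nat.exists_eq_add_of_le hs
  obtain ⟨b, rfl⟩ := Nat.exists_eq_add_of_le ht
  refine ⟨s, t, hsM, by omega, by omega, ?_⟩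
  have ha : s + a - s = a := by omega
  have hbb : t + b - t = b := by omega
  rw [ha, hbb]
  rw [Prod.ext_iff]
  constructor
  · rw [e1', Nat.sub_eq_iff_eq_add h1]; ring
  · rw [e2', Nat.sub_eq_iff_eq_add h2]; ring

lemma key_s9 {p1 q1 p2 q2 : ℕ} (hp1 : 0 < p1) (hq2 : 0 < q2) (hD : q1 * p2 < p1 * q2)
    {M : Set (ℕ × ℕ)} (hM : (0, 0) ∉ M) {x y : ℕ} (hT : inTQ p1 q1 p2 q2 (x, y)) :
    ∀ n A B, A + B = n →
      (PPos (QMove p1 q1 p2 q2 M) (x + A * p1 + B * p2, y + A * q1 + B * q2) ↔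
        PPos (QMove 1 0 0 1 M) (A, B)) := by
  intro n
  induction n using Nat.strong_induction_on with
  | _ n ih =>
    intro A B hAB
    constructor
    · intro hP
      rw [PPos_iff]
      rintro pos' hmv hdec hP'
      rw [GMove_iff] at hmv
      obtain ⟨s, t, hsM, hs, ht, e1, e2⟩ := hmv
      simp only at hs ht e1 e2 hdec
      have hst : 0 < s + t := by omega
      obtain ⟨a, rfl⟩ := Nat.exists_eq_add_of_le hs
      obtain ⟨b, rfl⟩ := Nat.exists_eq_add_of_le ht
      have hpos' : pos' = (a, b) := by
        rw [Prod.ext_iff]; omega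
      subst hpos'
      rw [PPos_iff] at hP
      refine hP _ (bwd hD hT.1 hsM a b) ?_ ?_
      · simp only
        have : 0 < s * p1 + s * q1 + t * p2 + t * q2 := by
          rcases Nat.pos_of_ne_zero (by omega : s + t ≠ 0) with _
          rcases (by omega : 0 < s ∨ 0 < t) with hs0 | ht0
          · have := Nat.mul_le_mul hs0 hp1; nlinarith
          · have := Nat.mul_le_mul ht0 hq2; nlinarith
        nlinarith
      · exact (ih (a + b) (by omega) a b rfl).mpr hP'
    · intro hP
      rw [PPos_iff]
      rintro pos' hmv hdec hP'
      obtain ⟨s, t, hsM, hs, ht, hpe⟩ := fwd hD hT hmv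
      obtain ⟨a, rfl⟩ := Nat.exists_eq_add_of_le hs
      obtain ⟨b, rfl⟩ := Nat.exists_eq_add_of_le ht
      have ha : s + a - s = a := by omega
      have hbb : t + b - t = b := by omega
      rw [ha, hbb] at hpe
      subst hpe
      simp only at hdec hP'
      have hst : s ≠ 0 ∨ t ≠ 0 := by
        by_contra hcon
        push_neg at hcon
        obtain ⟨rfl, rfl⟩ := hcon
        simp at hdec
      rw [PPos_iff] at hP
      refine hP (a, b) ?_ ?_ ?_
      · rw [GMove_iff]
        exact ⟨s, t, hsM, by omega, by omega, by simp, by simp⟩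
      · simp only
        omega
      · exact (ih (a + b) (by omega) a b rfl).mp hP'

/-- The subtraction game `G(M)` is the Q-subtraction game with `p₁ = q₂ = 1`,
`q₁ = p₂ = 0` (there the `B_Q`-constraint is vacuous). -/
theorem stmt_9 (p1 q1 p2 q2 : ℕ) (hp1 : 0 < p1) (hq2 : 0 < q2)
    (hD : q1 * p2 < p1 * q2)
    (M : Set (ℕ × ℕ)) (hM : (0, 0) ∉ M) (A B : ℕ) :
    PPos (QMove 1 0 0 1 M) (A, B) ↔
      ∀ x y : ℕ, inTQ p1 q1 p2 q2 (x, y) →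
        PPos (QMove p1 q1 p2 q2 M) (x + A * p1 + B * p2, y + A * q1 + B * q2) := by
  have hDz : (q1 : ℤ) * p2 < (p1 : ℤ) * q2 := by exact_mod_cast hD
  constructor
  · intro h x y hT
    exact (key_s9 hp1 hq2 hD hM hT (A + B) A B rfl).mpr h
  · intro h
    have hT0 : inTQ p1 q1 p2 q2 (0, 0) := by
      refine ⟨⟨by simp, by simp⟩, ?_, ?_⟩ <;> · simp only [Nat.cast_zero]; linarith
    exact (key_s9 hp1 hq2 hD hM hT0 (A + B) A B rfl).mp (h 0 0 hT0)
end

section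
/- The set of P-positions of Rational Wythoff Nim equals the set of all positions of the two forms (x + p₁·⌊φ²n⌋ + p₂·⌊φn⌋, y + q₁·⌊φ²n⌋ + q₂·⌊φn⌋) and (x + p₁·⌊φn⌋ + p₂·⌊φ²n⌋, y + q₁·⌊φn⌋ + q₂·⌊φ²n⌋), where (x,y) ranges over T_Q and n ranges over the nonnegative integers, and φ := (1+√5)/2 is the golden ratio. -/
/-- The move set of Rational Wythoff Nim. -/
def MRW : Set (ℕ × ℕ) := {m | ∃ t : ℕ, 1 ≤ t ∧ (m = (0, t) ∨ m = (t, 0) ∨ m = (t, t))}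

/-- The golden ratio `φ = (1+√5)/2`. -/
noncomputable def phi : ℝ := (1 + Real.sqrt 5) / 2

noncomputable def WA (n : ℕ) : ℕ := ⌊phi * n⌋₊
noncomputable def WB (n : ℕ) : ℕ := ⌊phi ^ 2 * n⌋₊

lemma phi_eq : phi = Real.goldenRatio := rfl
lemma one_lt_phi : 1 < phi := Real.one_lt_goldenRatio
lemma phi_pos : 0 < phi := Real.goldenRatio_pos

lemma WB_eq (n : ℕ) : WB n = WA n + n := by
  unfold WA WB
  rw [phi_eq, Real.goldenRatio_sq, add_mul, one_mul, Nat.floor_add_natCast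
    (mul_nonneg Real.goldenRatio_pos.le (Nat.cast_nonneg n))]

lemma WA_strictMono : StrictMono WA := by
  apply strictMono_nat_of_lt_succ
  intro n
  have h1 : phi * n + 1 ≤ phi * (n + 1 : ℕ) := by push_cast; nlinarith [one_lt_phi]
  have h2 : WA n + 1 ≤ WA (n+1) := by
    unfold WA
    rw [← Nat.floor_add_one (mul_nonneg phi_pos.le (Nat.cast_nonneg n))]
    exact Nat.floor_mono h1
  omega

lemma WA_zero : WA 0 = 0 := by simp [WA]
lemma WB_zero : WB 0 = 0 := by simp [WB]

lemma WA_le (n : ℕ) : n ≤ WA n := by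
  have : ((n:ℕ):ℝ) ≤ phi * n := by nlinarith [one_lt_phi, Nat.cast_nonneg (α := ℝ) n]
  simpa [WA] using Nat.le_floor this

-- Beatty facts
lemma conj : Real.HolderConjugate phi (phi ^ 2) := by
  rw [Real.holderConjugate_iff]
  constructor
  · exact one_lt_phi
  · have h2 : phi ^ 2 = phi + 1 := by rw [phi_eq]; exact Real.goldenRatio_sq
    have h0 : phi ≠ 0 := ne_of_gt phi_pos
    field_simp
    linear_combination (-1) * h2

lemma beatty_nat (n : ℕ) : (WA n : ℤ) = beattySeq phi n ∧ (WB n : ℤ) = beattySeq (phi^2) n := by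
  constructor <;> · 
    simp only [WA, WB, beattySeq]
    rw [Int.natCast_floor_eq_floor (mul_nonneg (by rw [phi_eq]; positivity) (Nat.cast_nonneg _))]
    norm_num [mul_comm]

open scoped symmDiff in
lemma phi_irr : Irrational phi := by rw [phi_eq]; exact Real.goldenRatio_irrational

open scoped symmDiff in
lemma beatty_partition :
    {beattySeq phi k | k > 0} ∆ {beattySeq (phi^2) k | k > 0} = {n : ℤ | 0 < n} :=
  Irrational.beattySeq_symmDiff_beattySeq_pos conj phi_irr

lemma beatty_cover (j : ℕ) (hj : 1 ≤ j) :
    (∃ n, 1 ≤ n ∧ WA n = j) ∨ (∃ n, 1 ≤ n ∧ WB n = j) := by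
  have hmem : (j : ℤ) ∈ ({n : ℤ | 0 < n}) := by simp; omega
  rw [← beatty_partition, Set.mem_symmDiff] at hmem
  rcases hmem with ⟨⟨k, hk, hkj⟩, -⟩ | ⟨⟨k, hk, hkj⟩, -⟩
  · left
    refine ⟨k.toNat, by omega, ?_⟩
    have : (WA k.toNat : ℤ) = beattySeq phi k.toNat := (beatty_nat k.toNat).1
    rw [Int.toNat_of_nonneg (by omega)] at this
    omega
  · right
    refine ⟨k.toNat, by omega, ?_⟩
    have : (WB k.toNat : ℤ) = beattySeq (phi^2) k.toNat := (beatty_nat k.toNat).2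
    rw [Int.toNat_of_nonneg (by omega)] at this
    omega

lemma beatty_disj (n m : ℕ) (hn : 1 ≤ n) (hm : 1 ≤ m) : WA n ≠ WB m := by
  intro h
  have hj : 1 ≤ WA n := le_trans hn (WA_le n)
  have hmem : ((WA n : ℤ)) ∈ ({x : ℤ | 0 < x}) := by simp; omega
  rw [← beatty_partition, Set.mem_symmDiff] at hmem
  have h1 : (WA n : ℤ) ∈ {x | ∃ k > 0, beattySeq phi k = x} :=
    ⟨n, by exact_mod_cast hn, ((beatty_nat n).1).symm⟩
  have h2 : (WA n : ℤ) ∈ {x | ∃ k > 0, beattySeq (phi^2) k = x} :=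
    ⟨m, by exact_mod_cast hm, by rw [← (beatty_nat m).2]; exact_mod_cast h.symm⟩
  rcases hmem with ⟨-, hh⟩ | ⟨-, hh⟩ <;> exact hh ‹_›

lemma WB_strictMono : StrictMono WB := by
  intro a b h
  rw [WB_eq, WB_eq]
  have := WA_strictMono h
  omega

/-- Wythoff P-positions. -/
def WP (p : ℕ × ℕ) : Prop := ∃ n : ℕ, p = (WA n, WB n) ∨ p = (WB n, WA n)

/-- Wythoff moves. -/
def WMove (p p' : ℕ × ℕ) : Prop :=
  ∃ k : ℕ, 1 ≤ k ∧
    ((p'.1 + k = p.1 ∧ p'.2 = p.2) ∨ (p'.1 = p.1 ∧ p'.2 + k = p.2) ∨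
     (p'.1 + k = p.1 ∧ p'.2 + k = p.2))

lemma WP_swap {a b : ℕ} (h : WP (a, b)) : WP (b, a) := by
  obtain ⟨n, h | h⟩ := h
  · exact ⟨n, Or.inr (by simp_all [Prod.ext_iff])⟩
  · exact ⟨n, Or.inl (by simp_all [Prod.ext_iff])⟩

lemma WA_inj {n m : ℕ} (h : WA n = WA m) : n = m := WA_strictMono.injective h
lemma WB_inj {n m : ℕ} (h : WB n = WB m) : n = m := WB_strictMono.injective h

lemma AB_eq_zero {n m : ℕ} (h : WA n = WB m) : n = 0 ∧ m = 0 := by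
  rcases Nat.eq_zero_or_pos n with hn | hn
  · subst hn
    have h0 : WB m = 0 := by rw [← h, WA_zero]
    have := WB_eq m
    have := WA_le m
    omega
  · rcases Nat.eq_zero_or_pos m with hm | hm
    · subst hm
      have := WA_le n
      rw [WB_zero] at h
      omega
    · exact absurd h (beatty_disj n m hn hm)

lemma WP_no_move {p p' : ℕ × ℕ} (h : WP p) (h' : WP p') (hm : WMove p p') : False := by
  obtain ⟨k, hk, hcase⟩ := hm
  obtain ⟨n, hn | hn⟩ := h <;> obtain ⟨m, hm' | hm'⟩ := h' <;>
    subst hn <;> subst hm' <;>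
    simp only [Prod.mk.injEq] at hcase <;>
    rcases hcase with ⟨e1, e2⟩ | ⟨e1, e2⟩ | ⟨e1, e2⟩
  · -- (A m, B m) → hor ← (A n, B n)
    have := WB_inj e2; subst this; omega
  · have := WA_inj e1; subst this; omega
  · have h1 := WB_eq n; have h2 := WB_eq m
    have : m = n := by omega
    subst this; omega
  · -- (A n, B n) ← (B m, A m), horizontal: A m = B n
    obtain ⟨h1, h2⟩ := AB_eq_zero e2
    subst h1; subst h2
    rw [WA_zero, WB_zero] at *; omega
  · obtain ⟨h1, h2⟩ := AB_eq_zero e1.symm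
    subst h1; subst h2
    rw [WA_zero, WB_zero] at *; omega
  · have h1 := WB_eq n; have h2 := WB_eq m
    have : m = 0 ∧ n = 0 := by omega
    obtain ⟨hm0, hn0⟩ := this; subst hm0; subst hn0
    rw [WA_zero, WB_zero] at *; omega
  · -- p = (B n, A n), p' = (A m, B m), horiz: e2 : WB m = WA n
    obtain ⟨h1, h2⟩ := AB_eq_zero e2.symm
    subst h1; subst h2
    rw [WA_zero, WB_zero] at *; omega
  · obtain ⟨h1, h2⟩ := AB_eq_zero e1
    subst h1; subst h2
    rw [WA_zero, WB_zero] at *; omega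
  · have h1 := WB_eq n; have h2 := WB_eq m
    have : m = 0 ∧ n = 0 := by omega
    obtain ⟨hm0, hn0⟩ := this; subst hm0; subst hn0
    rw [WA_zero, WB_zero] at *; omega
  · have := WA_inj e2; subst this; omega
  · have := WB_inj e1; subst this; omega
  · have h1 := WB_eq n; have h2 := WB_eq m
    have : m = n := by omega
    subst this; omega

lemma WMove_swap {a b c d : ℕ} (h : WMove (a,b) (c,d)) : WMove (b,a) (d,c) := by
  obtain ⟨k, hk, h⟩ := h
  exact ⟨k, hk, by dsimp at h ⊢; tauto⟩

lemma WP_exists_le {a b : ℕ} (hab : a ≤ b) (h : ¬ WP (a,b)) :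
    ∃ p', WMove (a,b) p' ∧ WP p' := by
  rcases Nat.eq_zero_or_pos a with ha | ha
  · subst ha
    have hb : b ≠ 0 := fun h0 => h ⟨0, Or.inl (by simp [WA_zero, WB_zero, h0])⟩
    exact ⟨(0,0), ⟨b, by omega, Or.inr (Or.inl ⟨rfl, by simp⟩)⟩,
      ⟨0, Or.inl (by simp [WA_zero, WB_zero])⟩⟩
  · rcases beatty_cover a ha with ⟨n, hn, hAn⟩ | ⟨n, hn, hBn⟩
    · rcases lt_trichotomy b (WB n) with hlt | heq | hgt
      · have hmn : b - a < n := by have := WB_eq n; omega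
        have hAm : WA (b - a) < a := by have := WA_strictMono hmn; omega
        refine ⟨(WA (b-a), WB (b-a)), ⟨a - WA (b-a), by omega,
          Or.inr (Or.inr ⟨by dsimp; omega, ?_⟩)⟩, ⟨b-a, Or.inl rfl⟩⟩
        have := WB_eq (b-a); dsimp; omega
      · exact absurd ⟨n, Or.inl (by rw [← hAn, ← heq])⟩ h
      · exact ⟨(a, WB n), ⟨b - WB n, by omega, Or.inr (Or.inl ⟨rfl, by dsimp; omega⟩)⟩,
          ⟨n, Or.inl (by rw [hAn])⟩⟩
    · have hA : WA n < a := by rw [← hBn]; have := WB_eq n; omega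
      exact ⟨(a, WA n), ⟨b - WA n, by omega, Or.inr (Or.inl ⟨rfl, by dsimp; omega⟩)⟩,
        ⟨n, Or.inr (by rw [hBn])⟩⟩

lemma WP_exists {a b : ℕ} (h : ¬ WP (a,b)) : ∃ p', WMove (a,b) p' ∧ WP p' := by
  rcases le_or_gt a b with hab | hab
  · exact WP_exists_le hab h
  · have h' : ¬ WP (b, a) := fun hh => h (WP_swap hh)
    obtain ⟨⟨c, d⟩, hm, hp⟩ := WP_exists_le hab.le h'
    exact ⟨(d, c), WMove_swap hm, WP_swap hp⟩
section Q
variable {p1 q1 p2 q2 : ℕ}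

/-- useful ℤ facts from `inTQ`. -/
lemma inTQ_facts (hT : inTQ p1 q1 p2 q2 (x, y)) :
    0 ≤ (p1:ℤ)*y - q1*x ∧ (p1:ℤ)*y - q1*x < (p1:ℤ)*q2 - q1*p2 ∧
    0 ≤ (q2:ℤ)*x - p2*y ∧ (q2:ℤ)*x - p2*y < (p1:ℤ)*q2 - q1*p2 := by
  obtain ⟨⟨h1, h2⟩, h3, h4⟩ := hT
  dsimp at h1 h2 h3 h4
  have h1' : ((x:ℤ))*q1 ≤ (y:ℤ)*p1 := by exact_mod_cast h1
  have h2' : ((y:ℤ))*p2 ≤ (x:ℤ)*q2 := by exact_mod_cast h2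
  refine ⟨by linarith, by nlinarith [h3], by linarith, by nlinarith [h4]⟩

lemma inBQ_translate (hD : q1 * p2 < p1 * q2) {x y : ℕ} (h : inBQ p1 q1 p2 q2 (x, y))
    (a b : ℕ) : inBQ p1 q1 p2 q2 (x + p1*a + p2*b, y + q1*a + q2*b) := by
  obtain ⟨h1, h2⟩ := h
  dsimp at h1 h2
  constructor <;> dsimp
  · have hc : p2*q1 ≤ p1*q2 := by rw [Nat.mul_comm p2 q1]; exact hD.le
    have hb : b*(p2*q1) ≤ b*(p1*q2) := Nat.mul_le_mul_left b hc
    nlinarith [hb]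
  · have ha : a*(q1*p2) ≤ a*(p1*q2) := Nat.mul_le_mul_left a hD.le
    nlinarith [ha]
end Q

section Q2
variable {p1 q1 p2 q2 : ℕ}

lemma decomp (hD : q1 * p2 < p1 * q2) {X Y : ℕ} (h : inBQ p1 q1 p2 q2 (X, Y)) :
    ∃ x y a b : ℕ, inTQ p1 q1 p2 q2 (x, y) ∧
      X = x + p1*a + p2*b ∧ Y = y + q1*a + q2*b := by
  obtain ⟨h1, h2⟩ := h
  dsimp at h1 h2
  set D := p1*q2 - q1*p2 with hDdef
  have hDpos : 0 < D := by omega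
  have hDD : q1*p2 + D = p1*q2 := by omega
  set u := X*q2 - Y*p2 with hudef
  have hu : Y*p2 + u = X*q2 := by omega
  set v := Y*p1 - X*q1 with hvdef
  have hv : X*q1 + v = Y*p1 := by omega
  have hDDz : (q1:ℤ)*p2 + D = (p1:ℤ)*q2 := by exact_mod_cast hDD
  have huz : (Y:ℤ)*p2 + u = (X:ℤ)*q2 := by exact_mod_cast hu
  have hvz : (X:ℤ)*q1 + v = (Y:ℤ)*p1 := by exact_mod_cast hv
  set a := u / D with hadef
  set r := u % D with hrdef
  have hua : D*a + r = u := Nat.div_add_mod u D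
  have hrD : r < D := Nat.mod_lt _ hDpos
  set b := v / D with hbdef
  set s := v % D with hsdef
  have hvb : D*b + s = v := Nat.div_add_mod v D
  have hsD : s < D := Nat.mod_lt _ hDpos
  have hu2z : (D:ℤ)*a + r = u := by exact_mod_cast hua
  have hv2z : (D:ℤ)*b + s = v := by exact_mod_cast hvb
  -- the bounds
  have id1z : (p1:ℤ)*u + p2*v = X*D := by
    linear_combination (p1:ℤ)*huz + (p2:ℤ)*hvz - (X:ℤ)*hDDz
  have id2z : (q1:ℤ)*u + q2*v = Y*D := by
    linear_combination (q1:ℤ)*huz + (q2:ℤ)*hvz - (Y:ℤ)*hDDz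
  have id1 : p1*u + p2*v = X*D := by exact_mod_cast id1z
  have id2 : q1*u + q2*v = Y*D := by exact_mod_cast id2z
  have stepX : (p1*a + p2*b)*D ≤ X*D := by
    calc (p1*a + p2*b)*D = p1*(D*a) + p2*(D*b) := by ring
      _ ≤ p1*u + p2*v :=
        Nat.add_le_add (Nat.mul_le_mul_left _ (by omega)) (Nat.mul_le_mul_left _ (by omega))
      _ = X*D := id1
  have stepY : (q1*a + q2*b)*D ≤ Y*D := by
    calc (q1*a + q2*b)*D = q1*(D*a) + q2*(D*b) := by ring
      _ ≤ q1*u + q2*v :=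
        Nat.add_le_add (Nat.mul_le_mul_left _ (by omega)) (Nat.mul_le_mul_left _ (by omega))
      _ = Y*D := id2
  have boundX : p1*a + p2*b ≤ X := Nat.le_of_mul_le_mul_right stepX hDpos
  have boundY : q1*a + q2*b ≤ Y := Nat.le_of_mul_le_mul_right stepY hDpos
  refine ⟨X - (p1*a + p2*b), Y - (q1*a + q2*b), a, b, ?_, by omega, by omega⟩
  set x := X - (p1*a + p2*b) with hxdef
  set y := Y - (q1*a + q2*b) with hydef
  have hXn : X = x + (p1*a + p2*b) := by omega
  have hYn : Y = y + (q1*a + q2*b) := by omega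
  have hXz : (X:ℤ) = x + p1*a + p2*b := by exact_mod_cast (by omega : X = x + p1*a + p2*b)
  have hYz : (Y:ℤ) = y + q1*a + q2*b := by exact_mod_cast (by omega : Y = y + q1*a + q2*b)
  push_cast at hXz hYz
  have e1 : (p1:ℤ)*y = q1*x + s := by
    linear_combination (-1:ℤ)*hvz + (q1:ℤ)*hXz - (p1:ℤ)*hYz - hv2z + (b:ℤ)*hDDz
  have e2 : (q2:ℤ)*x = p2*y + r := by
    linear_combination (-1:ℤ)*huz - (q2:ℤ)*hXz + (p2:ℤ)*hYz - hu2z + (a:ℤ)*hDDz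
  have hsz : (s:ℤ) < D := by exact_mod_cast hsD
  have hrz : (r:ℤ) < D := by exact_mod_cast hrD
  have hs0 : (0:ℤ) ≤ s := Int.natCast_nonneg s
  have hr0 : (0:ℤ) ≤ r := Int.natCast_nonneg r
  have hDz : (D:ℤ) = (p1:ℤ)*q2 - q1*p2 := by linarith [hDDz]
  refine ⟨⟨?_, ?_⟩, ?_, ?_⟩ <;> dsimp
  · zify; linarith
  · zify; linarith
  · linarith
  · linarith
end Q2

section Q3
variable {p1 q1 p2 q2 : ℕ}

lemma move_bk (hD : q1 * p2 < p1 * q2) {x y : ℕ} (hT : inTQ p1 q1 p2 q2 (x, y))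
    {a b s t : ℕ} (hs : s ≤ a) (ht : t ≤ b) (hM : (s, t) ∈ MRW) :
    QMove p1 q1 p2 q2 MRW (x + p1*a + p2*b, y + q1*a + q2*b)
      (x + p1*(a-s) + p2*(b-t), y + q1*(a-s) + q2*(b-t)) := by
  have e1 : p1*(a-s) + p1*s = p1*a := by rw [← Nat.mul_add]; congr 1; omega
  have e2 : p2*(b-t) + p2*t = p2*b := by rw [← Nat.mul_add]; congr 1; omega
  have e3 : q1*(a-s) + q1*s = q1*a := by rw [← Nat.mul_add]; congr 1; omega
  have e4 : q2*(b-t) + q2*t = q2*b := by rw [← Nat.mul_add]; congr 1; omega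
  exact ⟨s, t, hM, by dsimp; omega, by dsimp; omega, by dsimp; omega, by dsimp; omega,
    inBQ_translate hD hT.1 (a-s) (b-t)⟩

set_option maxHeartbeats 1000000 in
lemma move_char (hD : q1 * p2 < p1 * q2) {x y : ℕ} (hT : inTQ p1 q1 p2 q2 (x, y))
    (a b : ℕ) (pos' : ℕ × ℕ) :
    QMove p1 q1 p2 q2 MRW (x + p1*a + p2*b, y + q1*a + q2*b) pos' ↔
    ∃ a' b' : ℕ, WMove (a, b) (a', b') ∧
      pos' = (x + p1*a' + p2*b', y + q1*a' + q2*b') := by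
  constructor
  · rintro ⟨s, t, hM, hle1, hle2, hc1, hc2, hB'⟩
    dsimp at hle1 hle2 hc1 hc2
    obtain ⟨hs0, hsD, hr0, hrD⟩ := inTQ_facts hT
    have hDzpos : (0:ℤ) < (p1:ℤ)*q2 - q1*p2 := by
      have : ((q1*p2 : ℕ):ℤ) < ((p1*q2 : ℕ):ℤ) := by exact_mod_cast hD
      push_cast at this; linarith
    have hC1 : (pos'.1:ℤ) = (x:ℤ) + p1*a + p2*b - (p1*s + p2*t) := by
      rw [hc1]; push_cast [Nat.cast_sub hle1]; ring
    have hC2 : (pos'.2:ℤ) = (y:ℤ) + q1*a + q2*b - (q1*s + q2*t) := by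
      rw [hc2]; push_cast [Nat.cast_sub hle2]; ring
    obtain ⟨hb1, hb2⟩ := hB'
    have hb1z : ((pos'.1:ℤ))*q1 ≤ (pos'.2:ℤ)*p1 := by exact_mod_cast hb1
    have hb2z : ((pos'.2:ℤ))*p2 ≤ (pos'.1:ℤ)*q2 := by exact_mod_cast hb2
    have hbeta : (pos'.2:ℤ)*p1 - (pos'.1:ℤ)*q1 =
        ((p1:ℤ)*y - q1*x) + ((b:ℤ) - t)*((p1:ℤ)*q2 - q1*p2) := by
      linear_combination (p1:ℤ)*hC2 - (q1:ℤ)*hC1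
    have halpha : (pos'.1:ℤ)*q2 - (pos'.2:ℤ)*p2 =
        ((q2:ℤ)*x - p2*y) + ((a:ℤ) - s)*((p1:ℤ)*q2 - q1*p2) := by
      linear_combination (q2:ℤ)*hC1 - (p2:ℤ)*hC2
    have htb : t ≤ b := by
      have h5 : ((t:ℤ) - b) * ((p1:ℤ)*q2 - q1*p2) < 1 * ((p1:ℤ)*q2 - q1*p2) := by
        linarith [hb1z, hbeta, hsD]
      have h6 : (t:ℤ) - b < 1 := lt_of_mul_lt_mul_right h5 hDzpos.le
      omega
    have hsa : s ≤ a := by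
      have h5 : ((s:ℤ) - a) * ((p1:ℤ)*q2 - q1*p2) < 1 * ((p1:ℤ)*q2 - q1*p2) := by
        linarith [hb2z, halpha, hrD]
      have h6 : (s:ℤ) - a < 1 := lt_of_mul_lt_mul_right h5 hDzpos.le
      omega
    refine ⟨a - s, b - t, ?_, ?_⟩
    · obtain ⟨k, hk, hcase | hcase | hcase⟩ := hM <;> rw [Prod.mk.injEq] at hcase
      · exact ⟨k, hk, Or.inr (Or.inl ⟨by omega, by omega⟩)⟩
      · exact ⟨k, hk, Or.inl ⟨by omega, by omega⟩⟩
      · exact ⟨k, hk, Or.inr (Or.inr ⟨by omega, by omega⟩)⟩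
    · have g1 : (pos'.1:ℤ) = ((x + p1*(a-s) + p2*(b-t) : ℕ) : ℤ) := by
        push_cast [Nat.cast_sub hsa, Nat.cast_sub htb]
        linear_combination hC1
      have g2 : (pos'.2:ℤ) = ((y + q1*(a-s) + q2*(b-t) : ℕ) : ℤ) := by
        push_cast [Nat.cast_sub hsa, Nat.cast_sub htb]
        linear_combination hC2
      have g1' : pos'.1 = x + p1*(a-s) + p2*(b-t) := by exact_mod_cast g1
      have g2' : pos'.2 = y + q1*(a-s) + q2*(b-t) := by exact_mod_cast g2
      exact Prod.ext g1' g2'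
  · rintro ⟨a', b', ⟨k, hk, hcase | hcase | hcase⟩, rfl⟩ <;> dsimp at hcase
    · obtain ⟨h1, h2⟩ := hcase
      obtain rfl : a = a' + k := by omega
      subst h2
      simpa using move_bk hD hT (a := a'+k) (b := b') (s := k) (t := 0) (by omega) (by omega)
        ⟨k, hk, Or.inr (Or.inl rfl)⟩
    · obtain ⟨h1, h2⟩ := hcase
      subst h1
      obtain rfl : b = b' + k := by omega
      simpa using move_bk hD hT (a := a') (b := b'+k) (s := 0) (t := k) (by omega) (by omega)
        ⟨k, hk, Or.inl rfl⟩
    · obtain ⟨h1, h2⟩ := hcase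
      obtain rfl : a = a' + k := by omega
      obtain rfl : b = b' + k := by omega
      simpa using move_bk hD hT (a := a'+k) (b := b'+k) (s := k) (t := k) (by omega) (by omega)
        ⟨k, hk, Or.inr (Or.inr rfl)⟩
end Q3

section Q4
variable {p1 q1 p2 q2 : ℕ}

lemma WMove_decreases {a b a' b' : ℕ} (h : WMove (a, b) (a', b')) : a' + b' < a + b := by
  obtain ⟨k, hk, h | h | h⟩ := h <;> dsimp at h <;> omega

lemma sum_lt (hp1 : 0 < p1) (hq2 : 0 < q2) {x y a b a' b' : ℕ}
    (hw : WMove (a, b) (a', b')) :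
    (x + p1*a' + p2*b') + (y + q1*a' + q2*b') < (x + p1*a + p2*b) + (y + q1*a + q2*b) := by
  obtain ⟨k, hk, h | h | h⟩ := hw <;> dsimp at h <;> obtain ⟨h1, h2⟩ := h
  · subst h2
    have e1 : p1*a' + p1*k = p1*a := by rw [← Nat.mul_add, h1]
    have e2 : q1*a' + q1*k = q1*a := by rw [← Nat.mul_add, h1]
    have : k ≤ p1*k := Nat.le_mul_of_pos_left k hp1
    omega
  · subst h1
    have e1 : p2*b' + p2*k = p2*b := by rw [← Nat.mul_add, h2]
    have e2 : q2*b' + q2*k = q2*b := by rw [← Nat.mul_add, h2]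
    have : k ≤ q2*k := Nat.le_mul_of_pos_left k hq2
    omega
  · have e1 : p1*a' + p1*k = p1*a := by rw [← Nat.mul_add, h1]
    have e2 : q1*a' + q1*k = q1*a := by rw [← Nat.mul_add, h1]
    have e3 : p2*b' + p2*k = p2*b := by rw [← Nat.mul_add, h2]
    have e4 : q2*b' + q2*k = q2*b := by rw [← Nat.mul_add, h2]
    have : k ≤ p1*k := Nat.le_mul_of_pos_left k hp1
    omega

lemma bridge (hp1 : 0 < p1) (hq2 : 0 < q2) (hD : q1 * p2 < p1 * q2) :
    ∀ N a b x y : ℕ, a + b = N → inTQ p1 q1 p2 q2 (x, y) →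
      (PPos (QMove p1 q1 p2 q2 MRW) (x + p1*a + p2*b, y + q1*a + q2*b) ↔ WP (a, b)) := by
  intro N
  induction N using Nat.strong_induction_on with
  | _ N IH =>
    intro a b x y hab hT
    constructor
    · intro hP
      by_contra hnW
      obtain ⟨⟨a', b'⟩, hm, hp'⟩ := WP_exists hnW
      have hmove := (move_char hD hT a b _).mpr ⟨a', b', hm, rfl⟩
      have hlt := sum_lt (x := x) (y := y) (p1 := p1) (q1 := q1) (p2 := p2) (q2 := q2)
        hp1 hq2 hm
      have hd : a' + b' < a + b := WMove_decreases hm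
      rw [PPos] at hP
      exact hP _ hmove (by dsimp; exact hlt)
        ((IH (a'+b') (by omega) a' b' x y rfl hT).mpr hp')
    · intro hW
      rw [PPos]
      rintro pos' hmove hsum
      obtain ⟨a', b', hm, rfl⟩ := (move_char hD hT a b pos').mp hmove
      have hnW : ¬ WP (a', b') := fun h' => WP_no_move hW h' hm
      have hd : a' + b' < a + b := WMove_decreases hm
      rw [IH (a'+b') (by omega) a' b' x y rfl hT]
      exact hnW
end Q4


theorem stmt_11 (p1 q1 p2 q2 : ℕ) (hp1 : 0 < p1) (hq2 : 0 < q2)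
    (hD : q1 * p2 < p1 * q2) :
    {pos : ℕ × ℕ | inBQ p1 q1 p2 q2 pos ∧ PPos (QMove p1 q1 p2 q2 MRW) pos} =
      {pos : ℕ × ℕ | ∃ x y n : ℕ, inTQ p1 q1 p2 q2 (x, y) ∧
        (pos = (x + p1 * ⌊phi ^ 2 * n⌋₊ + p2 * ⌊phi * n⌋₊,
                y + q1 * ⌊phi ^ 2 * n⌋₊ + q2 * ⌊phi * n⌋₊) ∨
         pos = (x + p1 * ⌊phi * n⌋₊ + p2 * ⌊phi ^ 2 * n⌋₊,
                y + q1 * ⌊phi * n⌋₊ + q2 * ⌊phi ^ 2 * n⌋₊))} := by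
  ext ⟨X, Y⟩
  simp only [Set.mem_setOf_eq]
  constructor
  · rintro ⟨hB, hP⟩
    obtain ⟨x, y, a, b, hT, hX, hY⟩ := decomp hD hB
    subst hX; subst hY
    have hW := (bridge hp1 hq2 hD (a+b) a b x y rfl hT).mp hP
    obtain ⟨n, hn | hn⟩ := hW <;> rw [Prod.mk.injEq] at hn <;> obtain ⟨rfl, rfl⟩ := hn
    · exact ⟨x, y, n, hT, Or.inr (by simp [WA, WB])⟩
    · exact ⟨x, y, n, hT, Or.inl (by simp [WA, WB])⟩
  · rintro ⟨x, y, n, hT, hn | hn⟩ <;> rw [hn]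
    · exact ⟨inBQ_translate hD hT.1 (WB n) (WA n),
        (bridge hp1 hq2 hD _ (WB n) (WA n) x y rfl hT).mpr ⟨n, Or.inr rfl⟩⟩
    · exact ⟨inBQ_translate hD hT.1 (WA n) (WB n),
        (bridge hp1 hq2 hD _ (WA n) (WB n) x y rfl hT).mpr ⟨n, Or.inl rfl⟩⟩
end
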